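/- arXiv:2405.17646 — 3 statements merged into one kernel-verified Lean document; each statement's English description precedes it below -/
import Mathlib

section
/- Let P be a finite poset and define gap(P) = c(P) + |P| - (max(P) + min(P) + edges(P)), where c(P) is the number of maximal chains, max(P) the number of maximal elements, min(P) the number of minimal elements, and edges(P) the number of cover relations. Let α be a minimal, non-maximal element of P, and let β_1,...,β_s be the elements covering α that cover at least two elements of P. Then gap(P) - gap(P \ α) = Σ_{i=1}^s (uc(β_i) - 1), where uc(v) denotes the number of saturated chains from v up to a maximal element of P. -/
open Classical

set_option linter.unusedSectionVars false
set_option linter.unreachableTactic false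
set_option linter.unusedTactic false
set_option linter.unusedVariables false
set_option maxHeartbeats 1000000

variable {α : Type*}

/-- A saturated chain from `v` up to a maximal element: a list `v = v₀ ⋖ v₁ ⋖ … ⋖ vₖ`
with `vₖ` maximal. -/
def UpChain [PartialOrder α] (v : α) (l : List α) : Prop :=
  l.Chain' (· ⋖ ·) ∧ l.head? = some v ∧ ∃ m, l.getLast? = some m ∧ IsMax m

/-- A saturated chain from a minimal element up to `v`. -/
def DownChain [PartialOrder α] (v : α) (l : List α) : Prop :=
  l.Chain' (· ⋖ ·) ∧ (∃ m, l.head? = some m ∧ IsMin m) ∧ l.getLast? = some v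

/-- `uc v` : the number of saturated chains from `v` up to a maximal element. -/
noncomputable def uc [PartialOrder α] (v : α) : ℕ := Nat.card {l : List α // UpChain v l}

/-- `dc v` : the number of saturated chains from `v` down to a minimal element. -/
noncomputable def dc [PartialOrder α] (v : α) : ℕ := Nat.card {l : List α // DownChain v l}

/-- A maximal chain: a saturated chain from a minimal element to a maximal element. -/
def IsMaxChainList [PartialOrder α] (l : List α) : Prop :=
  l.Chain' (· ⋖ ·) ∧ (∃ m, l.head? = some m ∧ IsMin m) ∧ ∃ m, l.getLast? = some m ∧ IsMax m

/-- `c(P)`: the number of maximal chains. -/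
noncomputable def numMaxChains (α : Type*) [PartialOrder α] : ℕ :=
  Nat.card {l : List α // IsMaxChainList l}

/-- `max(P)`: the number of maximal elements. -/
noncomputable def numMax (α : Type*) [PartialOrder α] : ℕ := Nat.card {v : α // IsMax v}

/-- `min(P)`: the number of minimal elements. -/
noncomputable def numMin (α : Type*) [PartialOrder α] : ℕ := Nat.card {v : α // IsMin v}

/-- `edges(P)`: the number of cover relations (edges of the Hasse diagram). -/
noncomputable def numEdges (α : Type*) [PartialOrder α] : ℕ :=
  Nat.card {p : α × α // p.1 ⋖ p.2}

/-- `gap(P) = c(P) + |P| - (max(P) + min(P) + edges(P))`. -/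
noncomputable def gap (α : Type*) [PartialOrder α] : ℤ :=
  (numMaxChains α : ℤ) + Nat.card α - ((numMax α : ℤ) + numMin α + numEdges α)

/-- The crossing number `(uc(v)-1)(dc(v)-1)` of `v`. -/
noncomputable def crossingNumber [PartialOrder α] (v : α) : ℕ := (uc v - 1) * (dc v - 1)

/-- `c` is the center of an X-shaped subposet: there are `a, b < c < d, e`
with `a ∥ b` and `d ∥ e`. -/
def IsXCenter [PartialOrder α] (c : α) : Prop :=
  ∃ a b d e : α, a < c ∧ b < c ∧ c < d ∧ c < e ∧
    ¬ a ≤ b ∧ ¬ b ≤ a ∧ ¬ d ≤ e ∧ ¬ e ≤ d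

/-- `P` contains an X-shaped subposet. -/
def HasX (α : Type*) [PartialOrder α] : Prop := ∃ c : α, IsXCenter c


section Aux

/-! ### generic tools -/

lemma finite_chains {β : Type*} [Finite β] [PartialOrder β] (p : List β → Prop)
    (hp : ∀ l, p l → l.Chain' (· ⋖ ·)) : Finite {l : List β // p l} := by
  haveI := Fintype.ofFinite β
  have h1 : {l : List β | p l} ⊆ {l : List β | l.length ≤ Fintype.card β} := by
    intro l hl
    have hpw := (List.isChain_iff_pairwise).mp ((hp l hl).imp fun _ _ hc => hc.lt)
    have hnd : l.Nodup := hpw.imp ne_of_lt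
    exact hnd.length_le_card
  exact ((List.finite_length_le β (Fintype.card β)).subset h1).to_subtype

lemma card_split {β : Type*} (p q : β → Prop) [Finite {x // p x}] :
    Nat.card {x // p x} = Nat.card {x // p x ∧ q x} + Nat.card {x // p x ∧ ¬ q x} := by
  rw [Nat.card_congr (Equiv.sumCompl (fun y : {x // p x} => q y.val)).symm, Nat.card_sum,
    Nat.card_congr (Equiv.subtypeSubtypeEquivSubtypeInter p q),
    Nat.card_congr (Equiv.subtypeSubtypeEquivSubtypeInter p (fun x => ¬ q x))]

section Transfer
variable [PartialOrder α] {a : α}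

lemma val_covBy_iff (hmin : IsMin a) (x y : {x : α // x ≠ a}) : x ⋖ y ↔ x.val ⋖ y.val := by
  constructor
  · rintro ⟨hlt, h2⟩
    refine ⟨Subtype.coe_lt_coe.mpr hlt, fun z hz1 hz2 => ?_⟩
    have hza : z ≠ a := by rintro rfl; exact hmin.not_lt hz1
    exact @h2 ⟨z, hza⟩ hz1 hz2
  · rintro ⟨hlt, h2⟩
    exact ⟨hlt, fun z hz1 hz2 => h2 hz1 hz2⟩

lemma isMax_val_iff (hmin : IsMin a) (x : {x : α // x ≠ a}) : IsMax x ↔ IsMax x.val := by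
  constructor
  · intro h y hy
    have hya : y ≠ a := by
      rintro rfl
      exact x.2 (le_antisymm (hmin hy) hy).symm
    exact h (b := ⟨y, hya⟩) hy
  · intro h y hy
    exact h (Subtype.coe_le_coe.mpr hy)

lemma isMin_subtype_iff (x : {x : α // x ≠ a}) : IsMin x ↔ ∀ y, y < x.val → y = a := by
  constructor
  · intro h y hy
    by_contra hya
    exact absurd (h (b := ⟨y, hya⟩) hy.le) (not_le_of_gt hy)
  · intro h y hy
    rcases eq_or_lt_of_le hy with heq | hlt
    · exact (Subtype.ext_iff.mpr (Subtype.ext_iff.mp heq)).ge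
    · exact absurd (h y.val hlt) y.2

def liftL (a : α) (l : List α) (h : ∀ x ∈ l, x ≠ a) : List {x : α // x ≠ a} :=
  l.pmap (fun x hx => ⟨x, hx⟩) h

@[simp] lemma map_val_liftL (l : List α) (h : ∀ x ∈ l, x ≠ a) :
    (liftL a l h).map Subtype.val = l := by
  simp [liftL, List.map_pmap, List.pmap_eq_map]

lemma map_val_inj : Function.Injective
    (List.map (Subtype.val : {x : α // x ≠ a} → α)) :=
  List.map_injective_iff.mpr Subtype.val_injective

lemma chain'_iff_map (hmin : IsMin a) (l : List {x : α // x ≠ a}) :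
    l.Chain' (· ⋖ ·) ↔ (l.map Subtype.val).Chain' (· ⋖ ·) := by
  show List.IsChain _ l ↔ List.IsChain _ _
  rw [List.isChain_map]
  constructor
  · exact fun h => h.imp fun x y hc => (val_covBy_iff hmin x y).mp hc
  · exact fun h => h.imp fun x y hc => (val_covBy_iff hmin x y).mpr hc

lemma head_le_mem {l : List α} (hc : l.Chain' (· ⋖ ·)) {v : α}
    (hh : l.head? = some v) {x : α} (hx : x ∈ l) : v ≤ x := by
  have hp : l.Pairwise (· < ·) :=
    (List.isChain_iff_pairwise).mp (hc.imp fun _ _ h => h.lt)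
  rcases l with _ | ⟨y, t⟩
  · simp at hh
  · simp only [List.head?_cons, Option.some.injEq] at hh
    subst hh
    rcases List.mem_cons.mp hx with rfl | hx
    · rfl
    · exact ((List.pairwise_cons.mp hp).1 x hx).le

lemma mem_ne_a {l : List α} (hmin : IsMin a) (hc : l.Chain' (· ⋖ ·)) {v : α}
    (hh : l.head? = some v) (hv : v ≠ a) : ∀ x ∈ l, x ≠ a := by
  intro x hx
  rintro rfl
  exact hv (le_antisymm (hmin (head_le_mem hc hh hx)) (head_le_mem hc hh hx)).symm

end Transfer
end Aux
section Chains
variable [Fintype α] [PartialOrder α] {a : α}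

lemma card_sigma_uc (p : α → Prop) :
    Nat.card (Σ b : {b : α // p b}, {l : List α // UpChain b.val l}) =
      ∑ b ∈ Finset.univ.filter p, uc b := by
  haveI h1 : ∀ b : α, Finite {l : List α // UpChain b l} :=
    fun b => finite_chains _ (fun l h => h.1)
  haveI : ∀ b : {b : α // p b}, Fintype {l : List α // UpChain b.val l} :=
    fun b => Fintype.ofFinite _
  haveI : Fintype {b : α // p b} := Fintype.ofFinite _
  rw [Nat.card_eq_fintype_card, Fintype.card_sigma]
  have h2 : ∀ b : {b : α // p b}, Fintype.card {l : List α // UpChain b.val l} = uc b.val :=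
    fun b => (Nat.card_eq_fintype_card (α := {l : List α // UpChain b.val l})).symm
  rw [Finset.sum_congr rfl (fun b _ => h2 b)]
  exact (Finset.sum_subtype _ (by simp) uc).symm

lemma upchain_cons (hmin : IsMin a) {b : α} {l : List α} (hab : a ⋖ b) (h : UpChain b l) :
    IsMaxChainList (a :: l) := by
  obtain ⟨hc, hh, M, hM, hMax⟩ := h
  rcases l with _ | ⟨x, t⟩
  · simp at hh
  · simp only [List.head?_cons, Option.some.injEq] at hh
    subst hh
    exact ⟨List.isChain_cons_cons.mpr ⟨hab, hc⟩, ⟨a, rfl, hmin⟩, M,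
      by rw [List.getLast?_cons_cons]; exact hM, hMax⟩

lemma maxchain_mem_decomp (hmin : IsMin a) (hmax : ¬IsMax a) {l : List α}
    (hl : IsMaxChainList l) (hal : a ∈ l) :
    ∃ b t, l = a :: b :: t ∧ a ⋖ b ∧ UpChain b (b :: t) := by
  obtain ⟨hc, ⟨m, hm, hminm⟩, M, hM, hMax⟩ := hl
  rcases l with _ | ⟨x, t⟩
  · simp at hm
  · simp only [List.head?_cons, Option.some.injEq] at hm
    subst hm
    have hx : x = a := le_antisymm (head_le_mem hc rfl hal) (hmin (head_le_mem hc rfl hal))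
    subst hx
    rcases t with _ | ⟨b, t'⟩
    · simp only [List.getLast?_singleton, Option.some.injEq] at hM
      exact absurd (hM ▸ hMax) hmax
    · refine ⟨b, t', rfl, (List.isChain_cons_cons.mp hc).1,
        (List.isChain_cons_cons.mp hc).2, rfl, M, by rwa [List.getLast?_cons_cons] at hM, hMax⟩

lemma card_chains_mem (hmin : IsMin a) (hmax : ¬ IsMax a) :
    Nat.card {l : List α // IsMaxChainList l ∧ a ∈ l} =
      ∑ b ∈ Finset.univ.filter (fun b => a ⋖ b), uc b := by
  rw [← card_sigma_uc]
  refine (Nat.card_congr (Equiv.ofBijective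
    (fun x : (Σ b : {b : α // a ⋖ b}, {l : List α // UpChain b.val l}) =>
      (⟨a :: x.2.val, upchain_cons hmin x.1.2 x.2.2, List.mem_cons_self⟩ :
        {l : List α // IsMaxChainList l ∧ a ∈ l}))
    ⟨?_, ?_⟩)).symm
  · rintro ⟨⟨b, hb⟩, ⟨l, hl⟩⟩ ⟨⟨b', hb'⟩, ⟨l', hl'⟩⟩ h
    simp only [Subtype.mk.injEq, List.cons.injEq, true_and] at h
    subst h
    have hbb : b = b' := Option.some.inj (hl.2.1.symm.trans hl'.2.1)
    subst hbb
    rfl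
  · rintro ⟨l, hl, hal⟩
    obtain ⟨b, t, rfl, hab, hup⟩ := maxchain_mem_decomp hmin hmax hl hal
    exact ⟨⟨⟨b, hab⟩, ⟨b :: t, hup⟩⟩, rfl⟩

end Chains
section ChainsT
variable [Fintype α] [PartialOrder α] {a : α}

lemma lift_chain_package (hmin : IsMin a) {g : α} (hg : a < g) (hgm : ∀ y, y < g → y = a)
    {l : List α} (h : UpChain g l) :
    ∃ l' : List {x : α // x ≠ a}, l'.map Subtype.val = l ∧
      (IsMaxChainList l' ∧ ¬ ∃ m, l'.head? = some m ∧ IsMin m.val) := by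
  obtain ⟨hc, hh, M, hM, hMax⟩ := h
  have hne : ∀ x ∈ l, x ≠ a := mem_ne_a hmin hc hh (ne_of_gt hg)
  refine ⟨liftL a l hne, map_val_liftL l hne, ?_⟩
  have hhd : ((liftL a l hne).head?).map Subtype.val = some g := by
    rw [← List.head?_map, map_val_liftL l hne]; exact hh
  obtain ⟨m, hm, hmv⟩ := Option.map_eq_some_iff.mp hhd
  have hlst : ((liftL a l hne).getLast?).map Subtype.val = some M := by
    rw [← List.getLast?_map, map_val_liftL l hne]; exact hM
  obtain ⟨M', hM', hMv⟩ := Option.map_eq_some_iff.mp hlst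
  refine ⟨⟨(chain'_iff_map hmin _).mpr (by rw [map_val_liftL l hne]; exact hc),
    ⟨m, hm, (isMin_subtype_iff m).mpr (by rw [hmv]; exact hgm)⟩,
    M', hM', (isMax_val_iff hmin M').mpr (hMv ▸ hMax)⟩, ?_⟩
  rintro ⟨m₀, hm₀, hminv⟩
  have : m₀ = m := Option.some.inj (hm₀.symm.trans hm)
  subst this
  rw [hmv] at hminv
  exact (not_isMin_iff.mpr ⟨a, hg⟩) hminv

lemma chain_package_down (hmin : IsMin a) {l' : List {x : α // x ≠ a}}
    (h1 : IsMaxChainList l') (h2 : ¬ ∃ m, l'.head? = some m ∧ IsMin m.val) :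
    ∃ g, (a < g ∧ ∀ y, y < g → y = a) ∧ UpChain g (l'.map Subtype.val) := by
  obtain ⟨hc, ⟨m, hm, hminT⟩, M, hM, hMaxT⟩ := h1
  have hAll : ∀ y, y < m.val → y = a := (isMin_subtype_iff m).mp hminT
  have hnm : ¬ IsMin m.val := fun h => h2 ⟨m, hm, h⟩
  obtain ⟨y, hy⟩ := not_isMin_iff.mp hnm
  have hag : a < m.val := (hAll y hy) ▸ hy
  exact ⟨m.val, ⟨hag, hAll⟩, (chain'_iff_map hmin l').mp hc,
    by rw [List.head?_map, hm]; rfl,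
    M.val, by rw [List.getLast?_map, hM]; rfl, (isMax_val_iff hmin M).mp hMaxT⟩

lemma card_chains_newmin (hmin : IsMin a) :
    Nat.card {l : List {x : α // x ≠ a} // IsMaxChainList l ∧
        ¬ ∃ m, l.head? = some m ∧ IsMin m.val} =
      ∑ b ∈ Finset.univ.filter (fun b => a < b ∧ ∀ y, y < b → y = a), uc b := by
  have key : Nat.card {l : List {x : α // x ≠ a} // IsMaxChainList l ∧
        ¬ ∃ m, l.head? = some m ∧ IsMin m.val} =
      Nat.card (Σ g : {b : α // a < b ∧ ∀ y, y < b → y = a}, {l : List α // UpChain g.val l}) := by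
    refine (Nat.card_congr (Equiv.ofBijective
      (fun x : (Σ g : {b : α // a < b ∧ ∀ y, y < b → y = a}, {l : List α // UpChain g.val l}) =>
        (⟨(lift_chain_package hmin x.1.2.1 x.1.2.2 x.2.2).choose,
          (lift_chain_package hmin x.1.2.1 x.1.2.2 x.2.2).choose_spec.2⟩ :
          {l : List {x : α // x ≠ a} // IsMaxChainList l ∧
            ¬ ∃ m, l.head? = some m ∧ IsMin m.val}))
      ⟨?_, ?_⟩)).symm
    · rintro ⟨⟨g, hg⟩, ⟨l, hl⟩⟩ ⟨⟨g', hg'⟩, ⟨l', hl'⟩⟩ h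
      have h1 := (lift_chain_package hmin hg.1 hg.2 hl).choose_spec.1
      have h2 := (lift_chain_package hmin hg'.1 hg'.2 hl').choose_spec.1
      have hval : l = l' := by
        rw [← h1, ← h2]
        exact congrArg (List.map Subtype.val) (congrArg Subtype.val h)
      subst hval
      have hgg : g = g' := Option.some.inj (hl.2.1.symm.trans hl'.2.1)
      subst hgg
      rfl
    · rintro ⟨l', h1, h2⟩
      obtain ⟨g, hgp, hup⟩ := chain_package_down hmin h1 h2
      refine ⟨⟨⟨g, hgp⟩, ⟨l'.map Subtype.val, hup⟩⟩, ?_⟩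
      apply Subtype.ext
      apply map_val_inj
      exact (lift_chain_package hmin hgp.1 hgp.2 hup).choose_spec.1
  rw [key]
  convert card_sigma_uc _ using 2
  congr!

lemma chain_down3 (hmin : IsMin a) {l' : List {x : α // x ≠ a}}
    (h1 : IsMaxChainList l') (h2 : ∃ m, l'.head? = some m ∧ IsMin m.val) :
    IsMaxChainList (l'.map Subtype.val) ∧ a ∉ l'.map Subtype.val := by
  obtain ⟨hc, ⟨m, hm, _⟩, M, hM, hMaxT⟩ := h1
  obtain ⟨m₀, hm₀, hminv⟩ := h2
  have hmm : m₀ = m := Option.some.inj (hm₀.symm.trans hm)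
  subst hmm
  refine ⟨⟨(chain'_iff_map hmin l').mp hc,
    ⟨m₀.val, by rw [List.head?_map, hm]; rfl, hminv⟩,
    M.val, by rw [List.getLast?_map, hM]; rfl, (isMax_val_iff hmin M).mp hMaxT⟩, ?_⟩
  intro hmem
  obtain ⟨x, _, hx⟩ := List.mem_map.mp hmem
  exact x.2 hx

lemma chain_up3 (hmin : IsMin a) {l : List α} (h1 : IsMaxChainList l) (h2 : a ∉ l) :
    ∃ l' : List {x : α // x ≠ a}, l'.map Subtype.val = l ∧
      (IsMaxChainList l' ∧ ∃ m, l'.head? = some m ∧ IsMin m.val) := by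
  have hne : ∀ x ∈ l, x ≠ a := fun x hx hxa => h2 (hxa ▸ hx)
  obtain ⟨hc, ⟨m, hm, hminm⟩, M, hM, hMax⟩ := h1
  refine ⟨liftL a l hne, map_val_liftL l hne, ?_⟩
  have hhd : ((liftL a l hne).head?).map Subtype.val = some m := by
    rw [← List.head?_map, map_val_liftL l hne]; exact hm
  obtain ⟨m', hm', hmv⟩ := Option.map_eq_some_iff.mp hhd
  have hlst : ((liftL a l hne).getLast?).map Subtype.val = some M := by
    rw [← List.getLast?_map, map_val_liftL l hne]; exact hM
  obtain ⟨M', hM', hMv⟩ := Option.map_eq_some_iff.mp hlst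
  exact ⟨⟨(chain'_iff_map hmin _).mpr (by rw [map_val_liftL l hne]; exact hc),
    ⟨m', hm', (isMin_subtype_iff m').mpr (fun y hy => absurd hy (by rw [hmv]; exact IsMin.not_lt hminm))⟩,
    M', hM', (isMax_val_iff hmin M').mpr (hMv ▸ hMax)⟩,
    m', hm', by rw [hmv]; exact hminm⟩

lemma card_chains_avoid (hmin : IsMin a) :
    Nat.card {l : List α // IsMaxChainList l ∧ a ∉ l} =
      Nat.card {l : List {x : α // x ≠ a} // IsMaxChainList l ∧
        ∃ m, l.head? = some m ∧ IsMin m.val} := by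
  refine Nat.card_congr (Equiv.ofBijective
    (fun x : {l : List α // IsMaxChainList l ∧ a ∉ l} =>
      (⟨(chain_up3 hmin x.2.1 x.2.2).choose, (chain_up3 hmin x.2.1 x.2.2).choose_spec.2⟩ :
        {l : List {x : α // x ≠ a} // IsMaxChainList l ∧ ∃ m, l.head? = some m ∧ IsMin m.val}))
    ⟨?_, ?_⟩)
  · rintro ⟨l, hl⟩ ⟨l', hl'⟩ h
    have h1 := (chain_up3 hmin hl.1 hl.2).choose_spec.1
    have h2 := (chain_up3 hmin hl'.1 hl'.2).choose_spec.1
    have : l = l' := by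
      rw [← h1, ← h2]
      exact congrArg (List.map Subtype.val) (congrArg Subtype.val h)
    subst this
    rfl
  · rintro ⟨l', h1, h2⟩
    obtain ⟨hmc, hnotmem⟩ := chain_down3 hmin h1 h2
    refine ⟨⟨l'.map Subtype.val, hmc, hnotmem⟩, ?_⟩
    apply Subtype.ext
    apply map_val_inj
    exact (chain_up3 hmin hmc hnotmem).choose_spec.1

end ChainsT
section Counts
variable [Fintype α] [PartialOrder α] {a : α}

lemma numMax_eq (hmin : IsMin a) (hmax : ¬ IsMax a) :
    numMax {x : α // x ≠ a} = numMax α := by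
  refine Nat.card_congr ⟨fun x => ⟨x.val.val, (isMax_val_iff hmin x.val).mp x.2⟩,
    fun v => ⟨⟨v.val, fun h => hmax (h ▸ v.2)⟩, (isMax_val_iff hmin _).mpr v.2⟩,
    fun x => by ext; rfl, fun v => by ext; rfl⟩

lemma card_eq (a : α) : Nat.card α = Nat.card {x : α // x ≠ a} + 1 := by
  haveI : Unique {x : α // x = a} := ⟨⟨⟨a, rfl⟩⟩, by rintro ⟨x, rfl⟩; rfl⟩
  rw [Nat.card_congr (Equiv.sumCompl (fun x : α => x = a)).symm, Nat.card_sum,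
    Nat.card_unique, add_comm]

lemma numMin_eq (hmin : IsMin a) :
    numMin α + (Finset.univ.filter (fun b => a < b ∧ ∀ y, y < b → y = a)).card =
      numMin {x : α // x ≠ a} + 1 := by
  have h1 : numMin α = Nat.card {x : α // IsMin x ∧ x = a} +
      Nat.card {x : α // IsMin x ∧ x ≠ a} := card_split _ _
  haveI : Unique {x : α // IsMin x ∧ x = a} :=
    ⟨⟨⟨a, hmin, rfl⟩⟩, by rintro ⟨x, hx, rfl⟩; rfl⟩
  have h2 : Nat.card {x : α // IsMin x ∧ x = a} = 1 := Nat.card_unique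
  have h3 : numMin {x : α // x ≠ a} =
      Nat.card {x : {x : α // x ≠ a} // IsMin x ∧ IsMin x.val} +
      Nat.card {x : {x : α // x ≠ a} // IsMin x ∧ ¬ IsMin x.val} := card_split _ _
  have h4 : Nat.card {x : {x : α // x ≠ a} // IsMin x ∧ IsMin x.val} =
      Nat.card {x : α // IsMin x ∧ x ≠ a} := by
    refine Nat.card_congr ⟨fun x => ⟨x.val.val, x.2.2, x.val.2⟩,
      fun v => ⟨⟨v.val, v.2.2⟩, (isMin_subtype_iff _).mpr
        (fun y hy => absurd hy v.2.1.not_lt), v.2.1⟩,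
      fun x => by ext; rfl, fun v => by ext; rfl⟩
  have h5 : Nat.card {x : {x : α // x ≠ a} // IsMin x ∧ ¬ IsMin x.val} =
      (Finset.univ.filter (fun b => a < b ∧ ∀ y, y < b → y = a)).card := by
    have e : {x : {x : α // x ≠ a} // IsMin x ∧ ¬ IsMin x.val} ≃
        {b : α // a < b ∧ ∀ y, y < b → y = a} := by
      exact ⟨fun x => ⟨x.val.val, by
          obtain ⟨y, hy⟩ := not_isMin_iff.mp x.2.2
          exact lt_of_le_of_lt (le_of_eq ((isMin_subtype_iff x.val).mp x.2.1 y hy).symm) hy,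
          (isMin_subtype_iff x.val).mp x.2.1⟩,
        fun b => ⟨⟨b.val, fun h => ne_of_gt b.2.1 h⟩,
          (isMin_subtype_iff _).mpr b.2.2, not_isMin_iff.mpr ⟨a, b.2.1⟩⟩,
        fun x => by ext; rfl, fun v => by ext; rfl⟩
    rw [Nat.card_congr e, Nat.card_eq_fintype_card]
    convert Fintype.card_subtype _ using 2
    all_goals congr!
  omega

lemma numEdges_eq (hmin : IsMin a) :
    numEdges α = numEdges {x : α // x ≠ a} +
      (Finset.univ.filter (fun b => a ⋖ b)).card := by
  have h1 : numEdges α = Nat.card {p : α × α // p.1 ⋖ p.2 ∧ p.1 = a} +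
      Nat.card {p : α × α // p.1 ⋖ p.2 ∧ p.1 ≠ a} := card_split _ _
  have h2 : Nat.card {p : α × α // p.1 ⋖ p.2 ∧ p.1 = a} =
      (Finset.univ.filter (fun b => a ⋖ b)).card := by
    have e : {p : α × α // p.1 ⋖ p.2 ∧ p.1 = a} ≃ {b : α // a ⋖ b} :=
      ⟨fun p => ⟨p.val.2, by
          obtain ⟨⟨p1, p2⟩, hc, h⟩ := p
          dsimp only at h hc ⊢
          rwa [h] at hc⟩, fun b => ⟨(a, b.val), b.2, rfl⟩,
        fun p => by
          obtain ⟨⟨p1, p2⟩, hc, h⟩ := p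
          simp only at h
          subst h
          rfl,
        fun b => by ext; rfl⟩
    rw [Nat.card_congr e, Nat.card_eq_fintype_card]
    convert Fintype.card_subtype _ using 2
    all_goals congr!
  have h3 : Nat.card {p : α × α // p.1 ⋖ p.2 ∧ p.1 ≠ a} =
      numEdges {x : α // x ≠ a} := by
    refine Nat.card_congr ⟨fun p => ⟨(⟨p.val.1, p.2.2⟩, ⟨p.val.2, ?_⟩), ?_⟩, ?_, ?_, ?_⟩
    · intro h
      exact hmin.not_lt (h ▸ p.2.1.lt)
    · exact (val_covBy_iff hmin _ _).mpr p.2.1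
    · exact fun q => ⟨(q.val.1.val, q.val.2.val),
        (val_covBy_iff hmin _ _).mp q.2, q.val.1.2⟩
    · intro p; ext <;> rfl
    · intro q; ext <;> rfl
  omega

lemma cov_filter_split (hmin : IsMin a) :
    Finset.univ.filter (fun b => a ⋖ b) =
      (Finset.univ.filter (fun b => a < b ∧ ∀ y, y < b → y = a)) ∪
      (Finset.univ.filter (fun b : α => a ⋖ b ∧ ∃ c, c ≠ a ∧ c ⋖ b)) := by
  ext b
  simp only [Finset.mem_filter, Finset.mem_union, Finset.mem_univ, true_and]
  constructor
  · intro hb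
    by_cases hall : ∀ y, y < b → y = a
    · exact Or.inl ⟨hb.lt, hall⟩
    · push_neg at hall
      obtain ⟨y, hy, hya⟩ := hall
      obtain ⟨c, hyc, hcb⟩ := exists_le_covBy_of_lt hy
      refine Or.inr ⟨hb, c, ?_, hcb⟩
      rintro rfl
      exact hya (le_antisymm hyc (hmin hyc))
  · rintro (⟨hab, hall⟩ | ⟨hb, _⟩)
    · exact ⟨hab, fun z hz1 hz2 => absurd (hall z hz2) (ne_of_gt hz1)⟩
    · exact hb

lemma cov_filter_disj (hmin : IsMin a) :
    Disjoint (Finset.univ.filter (fun b => a < b ∧ ∀ y, y < b → y = a))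
      (Finset.univ.filter (fun b : α => a ⋖ b ∧ ∃ c, c ≠ a ∧ c ⋖ b)) := by
  rw [Finset.disjoint_left]
  intro b h1 h2
  simp only [Finset.mem_filter, Finset.mem_univ, true_and] at h1 h2
  obtain ⟨c, hca, hcb⟩ := h2.2
  exact hca (h1.2 c hcb.lt)

end Counts

theorem gap_deletion (α : Type*) [Fintype α] [PartialOrder α] (a : α)
    (hmin : IsMin a) (hmax : ¬ IsMax a) :
    gap α - gap {x : α // x ≠ a} =
      ∑ b ∈ Finset.univ.filter (fun b : α => a ⋖ b ∧ ∃ c, c ≠ a ∧ c ⋖ b),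
        ((uc b : ℤ) - 1) := by
  haveI hFin1 : Finite {l : List α // IsMaxChainList l} :=
    finite_chains _ (fun l h => h.1)
  haveI hFin2 : Finite {l : List {x : α // x ≠ a} // IsMaxChainList l} :=
    finite_chains _ (fun l h => h.1)
  have hc1 : numMaxChains α = Nat.card {l : List α // IsMaxChainList l ∧ a ∈ l} +
      Nat.card {l : List α // IsMaxChainList l ∧ ¬ a ∈ l} :=
    card_split _ (fun l => a ∈ l)
  have hc2 : numMaxChains {x : α // x ≠ a} =
      Nat.card {l : List {x : α // x ≠ a} // IsMaxChainList l ∧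
        (∃ m, l.head? = some m ∧ IsMin m.val)} +
      Nat.card {l : List {x : α // x ≠ a} // IsMaxChainList l ∧
        ¬ (∃ m, l.head? = some m ∧ IsMin m.val)} :=
    card_split _ (fun l : List {x : α // x ≠ a} => ∃ m, l.head? = some m ∧ IsMin m.val)
  have hmem := card_chains_mem hmin hmax
  have havoid := card_chains_avoid hmin
  have hnew := card_chains_newmin hmin
  have hsum : ∑ b ∈ Finset.univ.filter (fun b => a ⋖ b), uc b =
      (∑ b ∈ Finset.univ.filter (fun b => a < b ∧ ∀ y, y < b → y = a), uc b) +
      (∑ b ∈ Finset.univ.filter (fun b : α => a ⋖ b ∧ ∃ c, c ≠ a ∧ c ⋖ b), uc b) := by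
    rw [cov_filter_split hmin, Finset.sum_union (cov_filter_disj hmin)]
  have hcard : (Finset.univ.filter (fun b => a ⋖ b)).card =
      (Finset.univ.filter (fun b => a < b ∧ ∀ y, y < b → y = a)).card +
      (Finset.univ.filter (fun b : α => a ⋖ b ∧ ∃ c, c ≠ a ∧ c ⋖ b)).card := by
    rw [cov_filter_split hmin, Finset.card_union_of_disjoint (cov_filter_disj hmin)]
  have hmx := numMax_eq hmin hmax
  have hmn := numMin_eq hmin
  have hed := numEdges_eq hmin
  have hcd := card_eq a
  have hgoal : ∑ b ∈ Finset.univ.filter (fun b : α => a ⋖ b ∧ ∃ c, c ≠ a ∧ c ⋖ b),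
      ((uc b : ℤ) - 1) =
      ((∑ b ∈ Finset.univ.filter (fun b : α => a ⋖ b ∧ ∃ c, c ≠ a ∧ c ⋖ b), uc b : ℕ) : ℤ) -
      ((Finset.univ.filter (fun b : α => a ⋖ b ∧ ∃ c, c ≠ a ∧ c ⋖ b)).card : ℤ) := by
    rw [Finset.sum_sub_distrib, Finset.sum_const, nsmul_eq_mul, mul_one]
    push_cast
    ring
  rw [hgoal]
  unfold gap
  rw [hc1, hc2, hmem, havoid, hnew]
  have hmnz : (numMin α : ℤ) +
      ((Finset.univ.filter (fun b => a < b ∧ ∀ y, y < b → y = a)).card : ℤ) =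
      (numMin {x : α // x ≠ a} : ℤ) + 1 := by exact_mod_cast congrArg (Nat.cast (R := ℤ)) hmn
  have hedz : (numEdges α : ℤ) = (numEdges {x : α // x ≠ a} : ℤ) +
      ((Finset.univ.filter (fun b => a ⋖ b)).card : ℤ) := by
    exact_mod_cast congrArg (Nat.cast (R := ℤ)) hed
  have hcdz : (Nat.card α : ℤ) = (Nat.card {x : α // x ≠ a} : ℤ) + 1 := by
    exact_mod_cast congrArg (Nat.cast (R := ℤ)) hcd
  have hmxz : (numMax {x : α // x ≠ a} : ℤ) = (numMax α : ℤ) := by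
    exact_mod_cast congrArg (Nat.cast (R := ℤ)) hmx
  have hsumz : ((∑ b ∈ Finset.univ.filter (fun b => a ⋖ b), uc b : ℕ) : ℤ) =
      ((∑ b ∈ Finset.univ.filter (fun b => a < b ∧ ∀ y, y < b → y = a), uc b : ℕ) : ℤ) +
      ((∑ b ∈ Finset.univ.filter (fun b : α => a ⋖ b ∧ ∃ c, c ≠ a ∧ c ⋖ b), uc b : ℕ) : ℤ) := by
    exact_mod_cast congrArg (Nat.cast (R := ℤ)) hsum
  have hcardz : ((Finset.univ.filter (fun b => a ⋖ b)).card : ℤ) =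
      ((Finset.univ.filter (fun b => a < b ∧ ∀ y, y < b → y = a)).card : ℤ) +
      ((Finset.univ.filter (fun b : α => a ⋖ b ∧ ∃ c, c ≠ a ∧ c ⋖ b)).card : ℤ) := by
    exact_mod_cast congrArg (Nat.cast (R := ℤ)) hcard
  push_cast
  linarith
end

section
/- Let P be a finite poset and α a minimal, non-maximal element of P. Then the number of maximal chains of P equals the number of maximal chains of P \ α plus Σ_{i=1}^s uc(β_i), where β_1,...,β_s are the elements covering α that cover at least two elements of P, and uc(v) is the number of saturated chains from v to a maximal element of P. -/
open Classical

variable {α : Type*}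

section MCDAux

variable {P : Type*} [PartialOrder P]

lemma mcd_pairwise {l : List P} (h : l.Chain' (· ⋖ ·)) : l.Pairwise (· < ·) :=
  List.isChain_iff_pairwise.mp (h.imp fun _ _ hc => hc.lt)

lemma mcd_head_le {l : List P} (h : l.Pairwise (· < ·)) {h0 x : P}
    (hh : l.head? = some h0) (hx : x ∈ l) : h0 ≤ x := by
  cases l with
  | nil => simp at hh
  | cons y t =>
    simp only [List.head?_cons, Option.some.injEq] at hh
    subst hh
    rcases List.mem_cons.mp hx with rfl | hx
    · exact le_rfl
    · exact (List.rel_of_pairwise_cons h hx).le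

lemma mcd_not_mem {a : P} (hmin : IsMin a) {l : List P} (hc : l.Chain' (· ⋖ ·))
    (hh : ¬ l.head? = some a) : a ∉ l := by
  intro hmem
  cases l with
  | nil => simp at hmem
  | cons y t =>
    rcases List.mem_cons.mp hmem with rfl | hx
    · exact hh rfl
    · exact absurd (List.rel_of_pairwise_cons (mcd_pairwise hc) hx) hmin.not_lt

lemma mcd_finite {P : Type*} [Fintype P] [PartialOrder P] (φ : List P → Prop)
    (h : ∀ l, φ l → l.Chain' (· ⋖ ·)) : Finite {l : List P // φ l} := by
  have hsub : {l : List P | φ l} ⊆ {l : List P | l.length ≤ Fintype.card P} := fun l hl =>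
    ((mcd_pairwise (h l hl)).nodup).length_le_card
  exact ((List.finite_length_le P (Fintype.card P)).subset hsub).to_subtype

lemma mcd_split {γ : Type*} (p q : γ → Prop) [Finite {x // p x}] :
    Nat.card {x // p x} =
      Nat.card {x // p x ∧ q x} + Nat.card {x // p x ∧ ¬ q x} := by
  rw [← Nat.card_congr (Equiv.subtypeSubtypeEquivSubtypeInter p q),
    ← Nat.card_congr (Equiv.subtypeSubtypeEquivSubtypeInter p (fun x => ¬ q x)),
    ← Nat.card_sum]
  exact Nat.card_congr (Equiv.sumCompl (fun x : {x // p x} => q x.1)).symm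

lemma mcd_exists_le_covBy {P : Type*} [Fintype P] [PartialOrder P] {x y : P} (h : x < y) :
    ∃ c, x ≤ c ∧ c ⋖ y := by
  obtain ⟨m, hm, hmax⟩ := Set.Finite.exists_maximalFor id {c | x ≤ c ∧ c < y}
    (Set.toFinite _) ⟨x, le_rfl, h⟩
  refine ⟨m, hm.1, hm.2, fun z hz1 hz2 => ?_⟩
  have h2 : z ≤ m := hmax ⟨hm.1.trans hz1.le, hz2⟩ hz1.le
  exact absurd (lt_of_lt_of_le hz1 h2) (lt_irrefl _)

variable {a : P}

lemma mcd_covBy_iff (hmin : IsMin a) (x y : {x : P // x ≠ a}) :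
    x ⋖ y ↔ (x : P) ⋖ (y : P) := by
  constructor
  · rintro ⟨hlt, hno⟩
    refine ⟨hlt, fun z hz1 hz2 => ?_⟩
    have hza : z ≠ a := by rintro rfl; exact hmin.not_lt hz1
    exact hno (show x < ⟨z, hza⟩ from hz1) (show (⟨z, hza⟩ : {x : P // x ≠ a}) < y from hz2)
  · rintro ⟨hlt, hno⟩
    exact ⟨hlt, fun z hz1 hz2 => hno (show (x : P) < z from hz1) (show (z : P) < y from hz2)⟩

lemma mcd_isMax_iff (hmin : IsMin a) (x : {x : P // x ≠ a}) :
    IsMax x ↔ IsMax (x : P) := by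
  constructor
  · intro hx y hy
    rcases eq_or_ne y a with rfl | hya
    · exact hmin hy
    · exact hx (show x ≤ ⟨y, hya⟩ from hy)
  · intro hx y hy
    exact hx (show (x : P) ≤ y from hy)

end MCDAux

section MCDAux2

variable {P : Type*} [PartialOrder P] {a : P}

lemma mcd_map_prop (hmin : IsMin a) (Q : P → Prop) (l : List {x : P // x ≠ a}) :
    ((l.map Subtype.val).Chain' (· ⋖ ·) ∧
      (∃ h0, (l.map Subtype.val).head? = some h0 ∧ Q h0) ∧
      (∃ m, (l.map Subtype.val).getLast? = some m ∧ IsMax m) ∧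
      ∀ x ∈ l.map Subtype.val, x ≠ a)
    ↔ (l.Chain' (· ⋖ ·) ∧ (∃ h0, l.head? = some h0 ∧ Q (h0 : P)) ∧
        ∃ m, l.getLast? = some m ∧ IsMax m) := by
  constructor
  · rintro ⟨hc, ⟨h0, hh0, hQ⟩, ⟨m, hm, hmax⟩, -⟩
    refine ⟨((List.isChain_map Subtype.val).mp hc).imp
      (fun x y h => (mcd_covBy_iff hmin x y).mpr h), ?_, ?_⟩
    · rw [List.head?_map] at hh0
      obtain ⟨b, hb, rfl⟩ := Option.map_eq_some_iff.mp hh0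
      exact ⟨b, hb, hQ⟩
    · rw [List.getLast?_map] at hm
      obtain ⟨b, hb, rfl⟩ := Option.map_eq_some_iff.mp hm
      exact ⟨b, hb, (mcd_isMax_iff hmin b).mpr hmax⟩
  · rintro ⟨hc, ⟨h0, hh0, hQ⟩, ⟨m, hm, hmax⟩⟩
    refine ⟨(List.isChain_map Subtype.val).mpr
      (hc.imp fun x y h => (mcd_covBy_iff hmin x y).mp h), ?_, ?_, ?_⟩
    · exact ⟨h0.val, by rw [List.head?_map, hh0]; rfl, hQ⟩
    · exact ⟨m.val, by rw [List.getLast?_map, hm]; rfl, (mcd_isMax_iff hmin m).mp hmax⟩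
    · intro x hx
      obtain ⟨y, -, rfl⟩ := List.mem_map.mp hx
      exact y.2

lemma mcd_transfer [Fintype P] (hmin : IsMin a) (Q : P → Prop) :
    Nat.card {l : List P // l.Chain' (· ⋖ ·) ∧ (∃ h0, l.head? = some h0 ∧ Q h0) ∧
        (∃ m, l.getLast? = some m ∧ IsMax m) ∧ ∀ x ∈ l, x ≠ a} =
    Nat.card {l : List {x : P // x ≠ a} // l.Chain' (· ⋖ ·) ∧
        (∃ h0, l.head? = some h0 ∧ Q (h0 : P)) ∧ ∃ m, l.getLast? = some m ∧ IsMax m} := by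
  have hbij : Function.Bijective (fun l : {l : List {x : P // x ≠ a} // l.Chain' (· ⋖ ·) ∧
        (∃ h0, l.head? = some h0 ∧ Q (h0 : P)) ∧ ∃ m, l.getLast? = some m ∧ IsMax m} =>
      (⟨l.1.map Subtype.val, (mcd_map_prop hmin Q l.1).mpr l.2⟩ :
        {l : List P // l.Chain' (· ⋖ ·) ∧ (∃ h0, l.head? = some h0 ∧ Q h0) ∧
          (∃ m, l.getLast? = some m ∧ IsMax m) ∧ ∀ x ∈ l, x ≠ a})) := by
    constructor
    · intro x y hxy
      exact Subtype.ext (List.map_injective_iff.mpr Subtype.val_injective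
        (congrArg Subtype.val hxy))
    · rintro ⟨l, hl⟩
      have hall : ∀ x ∈ l, x ≠ a := hl.2.2.2
      set l' : List {x : P // x ≠ a} :=
        l.attach.map (fun x => ⟨x.1, hall x.1 x.2⟩) with hl'
      have hv : l'.map Subtype.val = l := by
        rw [hl', List.map_map]
        exact List.attach_map_subtype_val l
      have hlp : (l'.map Subtype.val).Chain' (· ⋖ ·) ∧
          (∃ h0, (l'.map Subtype.val).head? = some h0 ∧ Q h0) ∧
          (∃ m, (l'.map Subtype.val).getLast? = some m ∧ IsMax m) ∧
          ∀ x ∈ l'.map Subtype.val, x ≠ a := by rw [hv]; exact hl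
      exact ⟨⟨l', (mcd_map_prop hmin Q l').mp hlp⟩, Subtype.ext hv⟩
  exact (Nat.card_congr (Equiv.ofBijective _ hbij)).symm

end MCDAux2

section MCDAux3

lemma mcd_uc_sigma {P : Type*} [Fintype P] [PartialOrder P] {a : P} (hmax : ¬ IsMax a) :
    uc a = ∑ b ∈ Finset.univ.filter (fun b => a ⋖ b), uc b := by
  classical
  haveI : ∀ b : P, Finite {l : List P // UpChain b l} :=
    fun b => mcd_finite _ fun l hl => hl.1
  haveI F : ∀ b : P, Fintype {l : List P // UpChain b l} := fun b => Fintype.ofFinite _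
  have hcons : ∀ (b : {b : P // a ⋖ b}) (l : {l : List P // UpChain (b : P) l}),
      UpChain a (a :: l.1) := by
    rintro ⟨b, hb⟩ ⟨l, hc, hh, m, hm, hmx⟩
    refine ⟨List.isChain_cons.mpr ⟨?_, hc⟩, rfl, m, ?_, hmx⟩
    · intro y hy
      rw [hh] at hy
      obtain rfl := Option.mem_some_iff.mp hy
      exact hb
    · cases l with
      | nil => simp at hh
      | cons c t => rw [List.getLast?_cons_cons]; exact hm
  have hbij : Function.Bijective
      (fun x : Σ b : {b : P // a ⋖ b}, {l : List P // UpChain (b : P) l} =>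
        (⟨a :: x.2.1, hcons x.1 x.2⟩ : {l : List P // UpChain a l})) := by
    constructor
    · rintro ⟨⟨b, hb⟩, ⟨l, hl⟩⟩ ⟨⟨b', hb'⟩, ⟨l', hl'⟩⟩ hxy
      simp only [Subtype.mk.injEq, List.cons.injEq, true_and] at hxy
      subst hxy
      obtain rfl : b = b' := Option.some_inj.mp (hl.2.1.symm.trans hl'.2.1)
      rfl
    · rintro ⟨l, hc, hh, m, hm, hmx⟩
      cases l with
      | nil => simp at hh
      | cons x t =>
        simp only [List.head?_cons, Option.some.injEq] at hh
        subst hh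
        cases t with
        | nil =>
          simp only [List.getLast?_singleton, Option.some.injEq] at hm
          exact absurd (hm ▸ hmx) hmax
        | cons y t' =>
          have hcov : x ⋖ y := (List.isChain_cons_cons.mp hc).1
          rw [List.getLast?_cons_cons] at hm
          exact ⟨⟨⟨y, hcov⟩, ⟨y :: t', (List.isChain_cons_cons.mp hc).2, rfl, m, hm, hmx⟩⟩, rfl⟩
  haveI : Fintype {b : P // a ⋖ b} := Fintype.ofFinite _
  calc uc a = Nat.card (Σ b : {b : P // a ⋖ b}, {l : List P // UpChain (b : P) l}) :=
        (Nat.card_congr (Equiv.ofBijective _ hbij)).symm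
    _ = ∑ b : {b : P // a ⋖ b}, uc (b : P) := by
        rw [Nat.card_eq_fintype_card, Fintype.card_sigma]
        exact Finset.sum_congr rfl fun b _ => Nat.card_eq_fintype_card.symm
    _ = ∑ b ∈ Finset.univ.filter (fun b => a ⋖ b), uc b :=
        (Finset.sum_subtype _ (by simp) uc).symm

end MCDAux3


section MCDAux4

variable {P : Type*} [PartialOrder P] {a : P}

lemma mcd_gamma_min [Fintype P] (hmin : IsMin a) {b : P} (hab : a ⋖ b)
    (hno : ¬ ∃ c, c ≠ a ∧ c ⋖ b) (hb : b ≠ a) : IsMin (⟨b, hb⟩ : {x : P // x ≠ a}) := by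
  intro z hz
  rcases eq_or_lt_of_le (show (z : P) ≤ b from hz) with heq | hlt
  · exact le_of_eq (Subtype.ext heq).symm
  · obtain ⟨c, hzc, hcb⟩ := mcd_exists_le_covBy hlt
    have hca : c = a := by
      by_contra hca
      exact hno ⟨c, hca, hcb⟩
    subst hca
    exact absurd (le_antisymm hzc (hmin hzc)) z.2

lemma mcd_gamma_of_not_min [Fintype P] (hmin : IsMin a) {h0 : {x : P // x ≠ a}}
    (hsmin : IsMin h0) (hnmin : ¬ IsMin (h0 : P)) :
    a ⋖ (h0 : P) ∧ ¬ ∃ c, c ≠ a ∧ c ⋖ (h0 : P) := by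
  have hlt_a : ∀ z : P, z < (h0 : P) → z = a := by
    intro z hz
    by_contra hza
    exact absurd
      (show (h0 : P) ≤ z from hsmin (show (⟨z, hza⟩ : {x : P // x ≠ a}) ≤ h0 from hz.le))
      hz.not_ge
  obtain ⟨y, hy⟩ := not_isMin_iff.mp hnmin
  obtain rfl := hlt_a y hy
  refine ⟨⟨hy, fun z hz1 hz2 => ?_⟩, ?_⟩
  · exact absurd ((hlt_a z hz2) ▸ hz1) (lt_irrefl _)
  · rintro ⟨c, hca, hcb⟩
    exact hca (hlt_a c hcb.lt)

lemma mcd_uc_transfer [Fintype P] (hmin : IsMin a) {b : P} (hab : a < b) (hb : b ≠ a) :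
    Nat.card {l : List {x : P // x ≠ a} // UpChain (⟨b, hb⟩ : {x : P // x ≠ a}) l} = uc b := by
  have e1 : ∀ l : List {x : P // x ≠ a},
      UpChain (⟨b, hb⟩ : {x : P // x ≠ a}) l ↔
      (l.Chain' (· ⋖ ·) ∧ (∃ h0, l.head? = some h0 ∧ (h0 : P) = b) ∧
        ∃ m, l.getLast? = some m ∧ IsMax m) := by
    intro l
    constructor
    · rintro ⟨hc, hh, hm⟩
      exact ⟨hc, ⟨⟨b, hb⟩, hh, rfl⟩, hm⟩
    · rintro ⟨hc, ⟨h0, hh, hQ⟩, hm⟩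
      refine ⟨hc, ?_, hm⟩
      rwa [show h0 = ⟨b, hb⟩ from Subtype.ext hQ] at hh
  have e2 : ∀ l : List P,
      (l.Chain' (· ⋖ ·) ∧ (∃ h0, l.head? = some h0 ∧ h0 = b) ∧
        (∃ m, l.getLast? = some m ∧ IsMax m) ∧ ∀ x ∈ l, x ≠ a) ↔ UpChain b l := by
    intro l
    constructor
    · rintro ⟨hc, ⟨h0, hh, rfl⟩, hm, -⟩
      exact ⟨hc, hh, hm⟩
    · rintro ⟨hc, hh, hm⟩
      refine ⟨hc, ⟨b, hh, rfl⟩, hm, fun x hx => ?_⟩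
      rintro rfl
      exact absurd (mcd_head_le (mcd_pairwise hc) hh hx) hab.not_ge
  calc Nat.card {l : List {x : P // x ≠ a} // UpChain (⟨b, hb⟩ : {x : P // x ≠ a}) l}
      = Nat.card {l : List {x : P // x ≠ a} // l.Chain' (· ⋖ ·) ∧
          (∃ h0, l.head? = some h0 ∧ (h0 : P) = b) ∧
          ∃ m, l.getLast? = some m ∧ IsMax m} :=
        Nat.card_congr (Equiv.subtypeEquivRight e1)
    _ = Nat.card {l : List P // l.Chain' (· ⋖ ·) ∧ (∃ h0, l.head? = some h0 ∧ h0 = b) ∧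
          (∃ m, l.getLast? = some m ∧ IsMax m) ∧ ∀ x ∈ l, x ≠ a} :=
        (mcd_transfer hmin (fun x => x = b)).symm
    _ = uc b := Nat.card_congr (Equiv.subtypeEquivRight e2)

lemma mcd_gamma_sigma [Fintype P] (hmin : IsMin a) :
    Nat.card {l : List {x : P // x ≠ a} // IsMaxChainList l ∧
        ¬ ∃ h0 : {x : P // x ≠ a}, l.head? = some h0 ∧ IsMin (h0 : P)} =
    ∑ b ∈ Finset.univ.filter (fun b : P => (a ⋖ b ∧ ¬ ∃ c, c ≠ a ∧ c ⋖ b)), uc b := by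
  classical
  haveI hfin : ∀ b : {b : P // a ⋖ b ∧ ¬ ∃ c, c ≠ a ∧ c ⋖ b},
      Finite {l : List {x : P // x ≠ a} //
        UpChain (⟨b.1, b.2.1.lt.ne'⟩ : {x : P // x ≠ a}) l} :=
    fun b => mcd_finite _ fun l hl => hl.1
  haveI : ∀ b : {b : P // a ⋖ b ∧ ¬ ∃ c, c ≠ a ∧ c ⋖ b},
      Fintype {l : List {x : P // x ≠ a} //
        UpChain (⟨b.1, b.2.1.lt.ne'⟩ : {x : P // x ≠ a}) l} :=
    fun b => Fintype.ofFinite _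
  have hprop : ∀ (b : {b : P // a ⋖ b ∧ ¬ ∃ c, c ≠ a ∧ c ⋖ b})
      (l : {l : List {x : P // x ≠ a} //
        UpChain (⟨b.1, b.2.1.lt.ne'⟩ : {x : P // x ≠ a}) l}),
      IsMaxChainList l.1 ∧
        ¬ ∃ h0 : {x : P // x ≠ a}, l.1.head? = some h0 ∧ IsMin (h0 : P) := by
    rintro ⟨b, hb1, hb2⟩ ⟨l, hc, hh, hm⟩
    refine ⟨⟨hc, ⟨⟨b, hb1.lt.ne'⟩, hh, mcd_gamma_min hmin hb1 hb2 _⟩, hm⟩, ?_⟩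
    rintro ⟨h0, hh0, hmin0⟩
    rw [hh] at hh0
    obtain rfl := Option.some_inj.mp hh0
    exact hmin0.not_lt hb1.lt
  have hbij : Function.Bijective
      (fun x : Σ b : {b : P // a ⋖ b ∧ ¬ ∃ c, c ≠ a ∧ c ⋖ b},
          {l : List {x : P // x ≠ a} //
            UpChain (⟨b.1, b.2.1.lt.ne'⟩ : {x : P // x ≠ a}) l} =>
        (⟨x.2.1, hprop x.1 x.2⟩ : {l : List {x : P // x ≠ a} // IsMaxChainList l ∧
          ¬ ∃ h0 : {x : P // x ≠ a}, l.head? = some h0 ∧ IsMin (h0 : P)})) := by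
    constructor
    · rintro ⟨⟨b, hb⟩, ⟨l, hl⟩⟩ ⟨⟨b', hb'⟩, ⟨l', hl'⟩⟩ hxy
      simp only [Subtype.mk.injEq] at hxy
      subst hxy
      obtain rfl : b = b' :=
        congrArg Subtype.val (Option.some_inj.mp (hl.2.1.symm.trans hl'.2.1))
      rfl
    · rintro ⟨l, ⟨hc, ⟨h0, hh, hsmin⟩, hm⟩, hnp⟩
      have hnmin : ¬ IsMin (h0 : P) := fun h => hnp ⟨h0, hh, h⟩
      obtain ⟨hcov, hno⟩ := mcd_gamma_of_not_min hmin hsmin hnmin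
      refine ⟨⟨⟨(h0 : P), hcov, hno⟩, ⟨l, hc, ?_, hm⟩⟩, rfl⟩
      rwa [show (⟨(h0 : P), hcov.lt.ne'⟩ : {x : P // x ≠ a}) = h0 from Subtype.ext rfl]
  haveI : Fintype {b : P // a ⋖ b ∧ ¬ ∃ c, c ≠ a ∧ c ⋖ b} := Fintype.ofFinite _
  haveI : Finite {l : List {x : P // x ≠ a} // IsMaxChainList l ∧
      ¬ ∃ h0 : {x : P // x ≠ a}, l.head? = some h0 ∧ IsMin (h0 : P)} :=
    mcd_finite _ fun l hl => hl.1.1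
  calc Nat.card {l : List {x : P // x ≠ a} // IsMaxChainList l ∧
        ¬ ∃ h0 : {x : P // x ≠ a}, l.head? = some h0 ∧ IsMin (h0 : P)}
      = Nat.card (Σ b : {b : P // a ⋖ b ∧ ¬ ∃ c, c ≠ a ∧ c ⋖ b},
          {l : List {x : P // x ≠ a} //
            UpChain (⟨b.1, b.2.1.lt.ne'⟩ : {x : P // x ≠ a}) l}) :=
        (Nat.card_congr (Equiv.ofBijective _ hbij)).symm
    _ = ∑ b : {b : P // a ⋖ b ∧ ¬ ∃ c, c ≠ a ∧ c ⋖ b}, uc (b : P) := by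
        rw [Nat.card_eq_fintype_card, Fintype.card_sigma]
        exact Finset.sum_congr rfl fun b _ => by
          rw [← Nat.card_eq_fintype_card, mcd_uc_transfer hmin b.2.1.lt b.2.1.lt.ne']
    _ = ∑ b ∈ Finset.univ.filter (fun b : P => (a ⋖ b ∧ ¬ ∃ c, c ≠ a ∧ c ⋖ b)), uc b :=
        (Finset.sum_subtype _ (by simp) uc).symm

end MCDAux4


theorem maxChains_deletion (α : Type*) [Fintype α] [PartialOrder α] (a : α)
    (hmin : IsMin a) (hmax : ¬ IsMax a) :
    numMaxChains α =
      numMaxChains {x : α // x ≠ a} +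
        ∑ b ∈ Finset.univ.filter (fun b : α => a ⋖ b ∧ ∃ c, c ≠ a ∧ c ⋖ b), uc b := by
  classical
  haveI : Finite {l : List α // IsMaxChainList l} := mcd_finite _ fun l hl => hl.1
  haveI : Finite {l : List {x : α // x ≠ a} // IsMaxChainList l} :=
    mcd_finite _ fun l hl => hl.1
  have hsplit1 : numMaxChains α =
      Nat.card {l : List α // IsMaxChainList l ∧ l.head? = some a} +
      Nat.card {l : List α // IsMaxChainList l ∧ ¬ l.head? = some a} :=
    mcd_split _ _
  have h2 : Nat.card {l : List α // IsMaxChainList l ∧ l.head? = some a} = uc a := by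
    apply Nat.card_congr (Equiv.subtypeEquivRight ?_)
    intro l
    constructor
    · rintro ⟨⟨hc, -, hm⟩, hh⟩
      exact ⟨hc, hh, hm⟩
    · rintro ⟨hc, hh, hm⟩
      exact ⟨⟨hc, ⟨a, hh, hmin⟩, hm⟩, hh⟩
  have h3 : uc a = ∑ b ∈ Finset.univ.filter (fun b => a ⋖ b), uc b := mcd_uc_sigma hmax
  have h4 : ∑ b ∈ Finset.univ.filter (fun b => a ⋖ b), uc b =
      ∑ b ∈ Finset.univ.filter (fun b : α => a ⋖ b ∧ ∃ c, c ≠ a ∧ c ⋖ b), uc b +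
      ∑ b ∈ Finset.univ.filter (fun b : α => a ⋖ b ∧ ¬ ∃ c, c ≠ a ∧ c ⋖ b), uc b := by
    rw [← Finset.sum_filter_add_sum_filter_not (Finset.univ.filter (fun b => a ⋖ b))
      (fun b => ∃ c, c ≠ a ∧ c ⋖ b) uc, Finset.filter_filter, Finset.filter_filter]
  have hsplit2 : numMaxChains {x : α // x ≠ a} =
      Nat.card {l : List {x : α // x ≠ a} // IsMaxChainList l ∧
        ∃ h0 : {x : α // x ≠ a}, l.head? = some h0 ∧ IsMin (h0 : α)} +
      Nat.card {l : List {x : α // x ≠ a} // IsMaxChainList l ∧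
        ¬ ∃ h0 : {x : α // x ≠ a}, l.head? = some h0 ∧ IsMin (h0 : α)} :=
    mcd_split _ _
  have h5 : Nat.card {l : List {x : α // x ≠ a} // IsMaxChainList l ∧
        ∃ h0 : {x : α // x ≠ a}, l.head? = some h0 ∧ IsMin (h0 : α)} =
      Nat.card {l : List α // IsMaxChainList l ∧ ¬ l.head? = some a} := by
    have e1 : ∀ l : List {x : α // x ≠ a},
        (IsMaxChainList l ∧ ∃ h0 : {x : α // x ≠ a}, l.head? = some h0 ∧ IsMin (h0 : α)) ↔
        (l.Chain' (· ⋖ ·) ∧ (∃ h0, l.head? = some h0 ∧ IsMin (h0 : α)) ∧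
          ∃ m, l.getLast? = some m ∧ IsMax m) := by
      intro l
      constructor
      · rintro ⟨⟨hc, -, hm⟩, hh⟩
        exact ⟨hc, hh, hm⟩
      · rintro ⟨hc, ⟨h0, hh, hm0⟩, hm⟩
        refine ⟨⟨hc, ⟨h0, hh, fun z hz => ?_⟩, hm⟩, ⟨h0, hh, hm0⟩⟩
        exact hm0 (show (z : α) ≤ (h0 : α) from hz)
    have e2 : ∀ l : List α,
        (l.Chain' (· ⋖ ·) ∧ (∃ h0, l.head? = some h0 ∧ IsMin h0) ∧
          (∃ m, l.getLast? = some m ∧ IsMax m) ∧ ∀ x ∈ l, x ≠ a) ↔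
        (IsMaxChainList l ∧ ¬ l.head? = some a) := by
      intro l
      constructor
      · rintro ⟨hc, ⟨h0, hh, hm0⟩, hm, hall⟩
        exact ⟨⟨hc, ⟨h0, hh, hm0⟩, hm⟩, fun hha => hall a (List.mem_of_mem_head? hha) rfl⟩
      · rintro ⟨⟨hc, ⟨h0, hh, hm0⟩, hm⟩, hha⟩
        refine ⟨hc, ⟨h0, hh, hm0⟩, hm, fun x hx hxa => ?_⟩
        exact mcd_not_mem hmin hc hha (hxa ▸ hx)
    calc Nat.card {l : List {x : α // x ≠ a} // IsMaxChainList l ∧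
          ∃ h0 : {x : α // x ≠ a}, l.head? = some h0 ∧ IsMin (h0 : α)}
        = Nat.card {l : List {x : α // x ≠ a} // l.Chain' (· ⋖ ·) ∧
            (∃ h0, l.head? = some h0 ∧ IsMin (h0 : α)) ∧
            ∃ m, l.getLast? = some m ∧ IsMax m} :=
          Nat.card_congr (Equiv.subtypeEquivRight e1)
      _ = Nat.card {l : List α // l.Chain' (· ⋖ ·) ∧ (∃ h0, l.head? = some h0 ∧ IsMin h0) ∧
            (∃ m, l.getLast? = some m ∧ IsMax m) ∧ ∀ x ∈ l, x ≠ a} :=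
          (mcd_transfer hmin IsMin).symm
      _ = Nat.card {l : List α // IsMaxChainList l ∧ ¬ l.head? = some a} :=
          Nat.card_congr (Equiv.subtypeEquivRight e2)
  have h6 := mcd_gamma_sigma (a := a) hmin
  rw [hsplit1, h2, h3, h4, hsplit2, h5, h6]
  omega
end

section
/- Let P be a finite poset with gap(P) = c(P) + |P| - (max(P) + min(P) + edges(P)). For any maximal antichain A of P, gap(P) ≥ Σ_{v ∈ A} (uc(v) - 1)(dc(v) - 1), where uc(v) and dc(v) are the numbers of saturated chains from v up to a maximal element and down to a minimal element of P respectively. -/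
set_option linter.unusedSectionVars false
set_option linter.unusedVariables false
set_option maxHeartbeats 1000000


open Classical

variable {α : Type*}

section Basics
variable [Fintype α] [PartialOrder α]

lemma chain'_pairwise {l : List α} (h : l.Chain' (· ⋖ ·)) : l.Pairwise (· < ·) :=
  List.isChain_iff_pairwise.mp (List.IsChain.imp (fun a b hab => hab.lt) h)

lemma chain'_nodup {l : List α} (h : l.Chain' (· ⋖ ·)) : l.Nodup :=
  (chain'_pairwise h).imp ne_of_lt

noncomputable instance : Fintype {l : List α // l.Chain' (· ⋖ ·)} := by
  classical
  exact Fintype.ofInjective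
    (fun l => (⟨l.1, chain'_nodup l.2⟩ : {l : List α // l.Nodup}))
    (fun a b hab => Subtype.ext (by simpa using congrArg Subtype.val hab))

instance (v : α) : Finite {l : List α // UpChain v l} :=
  Finite.of_injective (fun l => (⟨l.1, l.2.1⟩ : {l : List α // l.Chain' (· ⋖ ·)}))
    (fun a b hab => Subtype.ext (by simpa using congrArg Subtype.val hab))

lemma upChain_singleton {v : α} (h : IsMax v) : UpChain v [v] :=
  ⟨List.isChain_singleton v, rfl, v, rfl, h⟩

lemma upChain_eq_singleton {v : α} (hv : IsMax v) {l : List α} (h : UpChain v l) : l = [v] := by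
  obtain ⟨hc, hh, m, hm, hmax⟩ := h
  match l with
  | [] => simp at hh
  | [a] => obtain rfl : a = v := by simpa using hh
           rfl
  | a :: b :: t =>
      obtain rfl : a = v := by simpa using hh
      exact absurd (List.isChain_cons_cons.mp hc).1.lt hv.not_lt

lemma uc_of_isMax {v : α} (hv : IsMax v) : uc v = 1 := by
  rw [uc, Nat.card_eq_one_iff_exists]
  refine ⟨⟨[v], upChain_singleton hv⟩, fun y => Subtype.ext ?_⟩
  exact upChain_eq_singleton hv y.2

/-- elements of an up-chain are above `v`. -/
lemma upChain_mem_le {v : α} {l : List α} (h : UpChain v l) : ∀ x ∈ l, v ≤ x := by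
  obtain ⟨hc, hh, -⟩ := h
  match l with
  | [] => simp at hh
  | a :: t =>
      obtain rfl : a = v := by simpa using hh
      intro x hx
      rcases List.mem_cons.mp hx with rfl | hx
      · exact le_rfl
      · exact (List.rel_of_pairwise_cons (chain'_pairwise hc) hx).le

noncomputable def upcovers (v : α) : Finset α := Finset.univ.filter (v ⋖ ·)

lemma mem_upcovers {v w : α} : w ∈ upcovers v ↔ v ⋖ w := by
  simp [upcovers]

lemma nat_card_sigma {ι : Type*} [Fintype ι] (f : ι → Type*) [∀ i, Finite (f i)] :
    Nat.card (Σ i, f i) = ∑ i, Nat.card (f i) := by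
  letI := fun i => Fintype.ofFinite (f i)
  simp [Nat.card_eq_fintype_card, Fintype.card_sigma]

lemma upChain_cons {v w : α} {l : List α} (hvw : v ⋖ w) (h : UpChain w l) :
    UpChain v (v :: l) := by
  obtain ⟨hc, hh, m, hm, hmax⟩ := h
  have hne : l ≠ [] := by intro h'; rw [h'] at hh; simp at hh
  refine ⟨List.isChain_cons.mpr ⟨fun y hy => ?_, hc⟩, rfl, m, ?_, hmax⟩
  · have : w = y := by rw [hh] at hy; simpa using hy
    exact this ▸ hvw
  · rw [show (v :: l) = [v] ++ l by rfl, List.getLast?_append_of_ne_nil _ hne]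
    exact hm

lemma upChain_cases {v : α} {l : List α} (h : UpChain v l) :
    (l = [v] ∧ IsMax v) ∨ ∃ w t, l = v :: w :: t ∧ v ⋖ w ∧ UpChain w (w :: t) := by
  obtain ⟨hc, hh, m, hm, hmax⟩ := h
  match l with
  | [] => simp at hh
  | [a] =>
      obtain rfl : v = a := by simpa using hh.symm
      left
      have : v = m := by simpa using hm
      exact ⟨rfl, this ▸ hmax⟩
  | a :: b :: t =>
      obtain rfl : v = a := by simpa using hh.symm
      right
      refine ⟨b, t, rfl, (List.isChain_cons_cons.mp hc).1,
        (List.isChain_cons_cons.mp hc).2, rfl, m, ?_, hmax⟩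
      simpa using hm

lemma uc_rec {v : α} (hv : ¬ IsMax v) : uc v = ∑ w ∈ upcovers v, uc w := by
  have key : Nat.card (Σ w : {w : α // v ⋖ w}, {l : List α // UpChain w.1 l})
      = Nat.card {l : List α // UpChain v l} := by
    apply Nat.card_eq_of_bijective
      (fun p => (⟨v :: p.2.1, upChain_cons p.1.2 p.2.2⟩ : {l : List α // UpChain v l}))
    constructor
    · rintro ⟨⟨w, hw⟩, ⟨l, hl⟩⟩ ⟨⟨w', hw'⟩, ⟨l', hl'⟩⟩ hll
      have h1 : l = l' := by simpa using congrArg Subtype.val hll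
      subst h1
      have : w = w' := by
        have := hl.2.1.symm.trans hl'.2.1
        simpa using this
      subst this
      rfl
    · rintro ⟨l, hl⟩
      rcases upChain_cases hl with ⟨rfl, hmax⟩ | ⟨w, t, rfl, hvw, hup⟩
      · exact absurd hmax hv
      · exact ⟨⟨⟨w, hvw⟩, ⟨w :: t, hup⟩⟩, rfl⟩
  rw [uc, ← key, nat_card_sigma]
  exact (Finset.sum_subtype (upcovers v) (fun x => mem_upcovers) uc).symm

lemma exists_upChain (v : α) : ∃ l : List α, UpChain v l := by
  refine wellFounded_gt.induction (C := fun v => ∃ l : List α, UpChain v l) v ?_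
  intro x ih
  by_cases hx : IsMax x
  · exact ⟨[x], upChain_singleton hx⟩
  · obtain ⟨w, hw⟩ := exists_covBy_of_wellFoundedLT hx
    obtain ⟨l, hl⟩ := ih w hw.lt
    exact ⟨x :: l, upChain_cons hw hl⟩

lemma uc_pos (v : α) : 1 ≤ uc v := by
  obtain ⟨l, hl⟩ := exists_upChain v
  have : Nonempty {l : List α // UpChain v l} := ⟨⟨l, hl⟩⟩
  exact Nat.card_pos

noncomputable def wplus (v : α) : ℕ := (upcovers v).card - 1

lemma upcovers_isMax {v : α} (hv : IsMax v) : upcovers v = ∅ := by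
  ext w; simp only [mem_upcovers, Finset.notMem_empty, iff_false]
  exact fun h => hv.not_lt h.lt

lemma upcovers_card_pos {v : α} (hv : ¬ IsMax v) : 1 ≤ (upcovers v).card := by
  obtain ⟨w, hw⟩ := exists_covBy_of_wellFoundedLT hv
  exact Finset.card_pos.mpr ⟨w, mem_upcovers.mpr hw⟩

lemma filter_sum_le (r : α → α → Prop) {s : Finset α} {q : α → Prop} (f : α → ℕ)
    (hcov : ∀ z, q z → ∃ w ∈ s, r w z) :
    ∑ z ∈ Finset.univ.filter q, f z ≤ ∑ w ∈ s, ∑ z ∈ Finset.univ.filter (r w ·), f z := by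
  simp_rw [Finset.sum_filter]
  rw [Finset.sum_comm]
  apply Finset.sum_le_sum
  intro z _
  by_cases hz : q z
  · rw [if_pos hz]
    obtain ⟨w, hws, hwz⟩ := hcov z hz
    calc f z = if r w z then f z else 0 := by rw [if_pos hwz]
      _ ≤ ∑ w' ∈ s, (if r w' z then f z else 0) :=
          Finset.single_le_sum (f := fun w' => if r w' z then f z else 0) (fun i _ => Nat.zero_le _) hws
  · rw [if_neg hz]
    exact Nat.zero_le _

lemma uc_key (v : α) : 1 + ∑ z ∈ Finset.univ.filter (v ≤ ·), wplus z ≤ uc v := by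
  refine wellFounded_gt.induction
    (C := fun v => 1 + ∑ z ∈ Finset.univ.filter (v ≤ ·), wplus z ≤ uc v) v ?_
  intro x ih
  by_cases hx : IsMax x
  · rw [uc_of_isMax hx]
    have hfil : Finset.univ.filter (x ≤ ·) = {x} := by
      ext z
      simp only [Finset.mem_filter, Finset.mem_univ, true_and, Finset.mem_singleton]
      exact ⟨fun h => le_antisymm (hx h) h |>.symm ▸ rfl, fun h => h ▸ le_rfl⟩
    rw [hfil, Finset.sum_singleton, wplus, upcovers_isMax hx]
    simp
  · rw [uc_rec hx]
    have hx_not : x ∉ Finset.univ.filter (x < ·) := by simp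
    have hfil : Finset.univ.filter (x ≤ ·) = insert x (Finset.univ.filter (x < ·)) := by
      ext z
      simp only [Finset.mem_filter, Finset.mem_univ, true_and, Finset.mem_insert]
      constructor
      · intro h
        rcases eq_or_lt_of_le h with h' | h'
        · exact Or.inl h'.symm
        · exact Or.inr h'
      · rintro (rfl | h)
        · exact le_rfl
        · exact h.le
    rw [hfil, Finset.sum_insert hx_not]
    have swap : ∑ z ∈ Finset.univ.filter (x < ·), wplus z ≤
        ∑ w ∈ upcovers x, ∑ z ∈ Finset.univ.filter (w ≤ ·), wplus z := by
      refine filter_sum_le (· ≤ ·) wplus ?_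
      intro z hz
      obtain ⟨w, hxw, hwz⟩ := hz.exists_covby_le
      exact ⟨w, mem_upcovers.mpr hxw, hwz⟩
    have hcard := upcovers_card_pos hx
    calc 1 + (wplus x + ∑ z ∈ Finset.univ.filter (x < ·), wplus z)
        ≤ (upcovers x).card + ∑ z ∈ Finset.univ.filter (x < ·), wplus z := by
          rw [wplus]; omega
      _ ≤ (upcovers x).card + ∑ w ∈ upcovers x, ∑ z ∈ Finset.univ.filter (w ≤ ·), wplus z := by
          exact Nat.add_le_add_left swap _
      _ = ∑ w ∈ upcovers x, (1 + ∑ z ∈ Finset.univ.filter (w ≤ ·), wplus z) := by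
          rw [Finset.sum_add_distrib, Finset.sum_const, Nat.smul_one_eq_cast]
          simp
      _ ≤ ∑ w ∈ upcovers x, uc w := Finset.sum_le_sum fun w hw => ih w (mem_upcovers.mp hw).lt

instance (v : α) : Finite {l : List α // DownChain v l} :=
  Finite.of_injective (fun l => (⟨l.1, l.2.1⟩ : {l : List α // l.Chain' (· ⋖ ·)}))
    (fun a b hab => Subtype.ext (by simpa using congrArg Subtype.val hab))

lemma downChain_singleton {v : α} (h : IsMin v) : DownChain v [v] :=
  ⟨List.isChain_singleton v, ⟨v, rfl, h⟩, rfl⟩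

lemma downChain_ne_nil {v : α} {l : List α} (h : DownChain v l) : l ≠ [] := by
  intro h'
  rw [h'] at h
  simp [DownChain] at h

lemma downChain_concat {v w : α} {l : List α} (hwv : w ⋖ v) (h : DownChain w l) :
    DownChain v (l ++ [v]) := by
  obtain ⟨hc, ⟨m, hm, hmin⟩, hlast⟩ := h
  have hne : l ≠ [] := by intro h'; rw [h'] at hlast; simp at hlast
  refine ⟨List.isChain_append.mpr ⟨hc, List.isChain_singleton v, ?_⟩,
    ⟨m, ?_, hmin⟩, List.getLast?_concat⟩
  · intro x hx y hy
    have hxw : w = x := by rw [hlast] at hx; simpa using hx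
    have hyv : v = y := by simpa using hy
    rw [← hxw, ← hyv]; exact hwv
  · rw [List.head?_append_of_ne_nil _ hne]; exact hm

lemma downChain_mem_le {v : α} {l : List α} (h : DownChain v l) : ∀ x ∈ l, x ≤ v := by
  obtain ⟨hc, -, hlast⟩ := h
  have hne : l ≠ [] := by intro h'; rw [h'] at hlast; simp at hlast
  have hdec : l.dropLast ++ [v] = l := List.dropLast_append_getLast? v hlast
  intro x hx
  rw [← hdec] at hx
  rcases List.mem_append.mp hx with hx | hx
  · have hp : l.Pairwise (· < ·) := chain'_pairwise hc
    rw [← hdec] at hp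
    exact (List.pairwise_append.mp hp).2.2 x hx v (by simp) |>.le
  · have : x = v := by simpa using hx
    exact this.le

lemma downChain_cases {v : α} {l : List α} (h : DownChain v l) :
    (l = [v] ∧ IsMin v) ∨ ∃ w t, l = t ++ [v] ∧ w ⋖ v ∧ DownChain w t := by
  obtain ⟨hc, ⟨m, hm, hmin⟩, hlast⟩ := h
  have hdec : l.dropLast ++ [v] = l := List.dropLast_append_getLast? v hlast
  by_cases ht : l.dropLast = []
  · left
    rw [ht, List.nil_append] at hdec
    have hmv : m = v := by rw [← hdec] at hm; simpa using hm.symm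
    exact ⟨hdec.symm, hmv ▸ hmin⟩
  · right
    have hwlast : l.dropLast.getLast? = some (l.dropLast.getLast ht) :=
      List.getLast?_eq_getLast ht
    have hcs := List.isChain_append.mp (hdec ▸ hc)
    refine ⟨l.dropLast.getLast ht, l.dropLast, hdec.symm, ?_, hcs.1, ⟨m, ?_, hmin⟩, hwlast⟩
    · have := hcs.2.2 _ (by rw [hwlast]; rfl) v rfl
      exact this
    · rw [← hdec, List.head?_append_of_ne_nil _ ht] at hm
      exact hm

lemma dc_of_isMin {v : α} (hv : IsMin v) : dc v = 1 := by
  rw [dc, Nat.card_eq_one_iff_exists]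
  refine ⟨⟨[v], downChain_singleton hv⟩, fun y => Subtype.ext ?_⟩
  rcases downChain_cases y.2 with ⟨h, -⟩ | ⟨w, t, -, hwv, -⟩
  · exact h
  · exact absurd hwv.lt hv.not_lt

noncomputable def downcovers (v : α) : Finset α := Finset.univ.filter (· ⋖ v)

lemma mem_downcovers {v w : α} : w ∈ downcovers v ↔ w ⋖ v := by
  simp [downcovers]

lemma dc_rec {v : α} (hv : ¬ IsMin v) : dc v = ∑ w ∈ downcovers v, dc w := by
  have key : Nat.card (Σ w : {w : α // w ⋖ v}, {l : List α // DownChain w.1 l})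
      = Nat.card {l : List α // DownChain v l} := by
    apply Nat.card_eq_of_bijective
      (fun p => (⟨p.2.1 ++ [v], downChain_concat p.1.2 p.2.2⟩ : {l : List α // DownChain v l}))
    constructor
    · rintro ⟨⟨w, hw⟩, ⟨l, hl⟩⟩ ⟨⟨w', hw'⟩, ⟨l', hl'⟩⟩ hll
      have h1 : l = l' := by
        have h2 : l ++ [v] = l' ++ [v] := by simpa using congrArg Subtype.val hll
        exact List.append_cancel_right h2
      subst h1
      have : w = w' := by
        have := hl.2.2.symm.trans hl'.2.2
        simpa using this
      subst this
      rfl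
    · rintro ⟨l, hl⟩
      rcases downChain_cases hl with ⟨rfl, hmin⟩ | ⟨w, t, rfl, hwv, hdown⟩
      · exact absurd hmin hv
      · exact ⟨⟨⟨w, hwv⟩, ⟨t, hdown⟩⟩, rfl⟩
  rw [dc, ← key, nat_card_sigma]
  exact (Finset.sum_subtype (downcovers v) (fun x => mem_downcovers) dc).symm

lemma exists_downChain (v : α) : ∃ l : List α, DownChain v l := by
  refine wellFounded_lt.induction (C := fun v => ∃ l : List α, DownChain v l) v ?_
  intro x ih
  by_cases hx : IsMin x
  · exact ⟨[x], downChain_singleton hx⟩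
  · obtain ⟨w, hw⟩ := exists_covBy_of_wellFoundedGT hx
    obtain ⟨l, hl⟩ := ih w hw.lt
    exact ⟨l ++ [x], downChain_concat hw hl⟩

lemma dc_pos (v : α) : 1 ≤ dc v := by
  obtain ⟨l, hl⟩ := exists_downChain v
  have : Nonempty {l : List α // DownChain v l} := ⟨⟨l, hl⟩⟩
  exact Nat.card_pos

noncomputable def wminus (v : α) : ℕ := (downcovers v).card - 1

lemma downcovers_isMin {v : α} (hv : IsMin v) : downcovers v = ∅ := by
  ext w; simp only [mem_downcovers, Finset.notMem_empty, iff_false]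
  exact fun h => hv.not_lt h.lt

lemma downcovers_card_pos {v : α} (hv : ¬ IsMin v) : 1 ≤ (downcovers v).card := by
  obtain ⟨w, hw⟩ := exists_covBy_of_wellFoundedGT hv
  exact Finset.card_pos.mpr ⟨w, mem_downcovers.mpr hw⟩

lemma dc_key (v : α) : 1 + ∑ z ∈ Finset.univ.filter (· ≤ v), wminus z ≤ dc v := by
  refine wellFounded_lt.induction
    (C := fun v => 1 + ∑ z ∈ Finset.univ.filter (· ≤ v), wminus z ≤ dc v) v ?_
  intro x ih
  by_cases hx : IsMin x
  · rw [dc_of_isMin hx]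
    have hfil : Finset.univ.filter (· ≤ x) = {x} := by
      ext z
      simp only [Finset.mem_filter, Finset.mem_univ, true_and, Finset.mem_singleton]
      exact ⟨fun h => le_antisymm h (hx h), fun h => h ▸ le_rfl⟩
    rw [hfil, Finset.sum_singleton, wminus, downcovers_isMin hx]
    simp
  · rw [dc_rec hx]
    have hx_not : x ∉ Finset.univ.filter (· < x) := by simp
    have hfil : Finset.univ.filter (· ≤ x) = insert x (Finset.univ.filter (· < x)) := by
      ext z
      simp only [Finset.mem_filter, Finset.mem_univ, true_and, Finset.mem_insert]
      constructor
      · intro h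
        rcases eq_or_lt_of_le h with h' | h'
        · exact Or.inl h'
        · exact Or.inr h'
      · rintro (rfl | h)
        · exact le_rfl
        · exact h.le
    rw [hfil, Finset.sum_insert hx_not]
    have swap : ∑ z ∈ Finset.univ.filter (· < x), wminus z ≤
        ∑ w ∈ downcovers x, ∑ z ∈ Finset.univ.filter (· ≤ w), wminus z := by
      refine filter_sum_le (fun w z => z ≤ w) wminus ?_
      intro z hz
      obtain ⟨w, hzw, hwx⟩ := hz.exists_le_covby
      exact ⟨w, mem_downcovers.mpr hwx, hzw⟩
    have hcard := downcovers_card_pos hx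
    calc 1 + (wminus x + ∑ z ∈ Finset.univ.filter (· < x), wminus z)
        ≤ (downcovers x).card + ∑ z ∈ Finset.univ.filter (· < x), wminus z := by
          rw [wminus]; omega
      _ ≤ (downcovers x).card + ∑ w ∈ downcovers x, ∑ z ∈ Finset.univ.filter (· ≤ w), wminus z := by
          exact Nat.add_le_add_left swap _
      _ = ∑ w ∈ downcovers x, (1 + ∑ z ∈ Finset.univ.filter (· ≤ w), wminus z) := by
          rw [Finset.sum_add_distrib, Finset.sum_const, Nat.smul_one_eq_cast]
          simp
      _ ≤ ∑ w ∈ downcovers x, dc w := Finset.sum_le_sum fun w hw => ih w (mem_downcovers.mp hw).lt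


instance : Finite {l : List α // IsMaxChainList l} :=
  Finite.of_injective (fun l => (⟨l.1, l.2.1⟩ : {l : List α // l.Chain' (· ⋖ ·)}))
    (fun a b hab => Subtype.ext (by simpa using congrArg Subtype.val hab))

def SPred (A : Finset α) (z : α) : Prop := ∃ a ∈ A, a ≤ z
def TPred (A : Finset α) (z : α) : Prop := ∃ a ∈ A, z ≤ a

lemma head?_cases {l : List α} {a : α} (h : l.head? = some a) : ∃ t, l = a :: t := by
  cases l with
  | nil => simp at h
  | cons b t => exact ⟨t, by simpa using congrArg (fun x => x :: t) (by simpa using h.symm : a = b).symm⟩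

lemma maxChain_of_mid {a : α} {ld t : List α} (hld : DownChain a ld)
    (hlu : UpChain a (a :: t)) : IsMaxChainList (ld ++ t) := by
  obtain ⟨hcd, hmind, hlast⟩ := hld
  obtain ⟨hcu, hhu, m, hmu, hmax⟩ := hlu
  have hne : ld ≠ [] := by intro h'; rw [h'] at hlast; simp at hlast
  refine ⟨List.isChain_append.mpr ⟨hcd, (List.isChain_cons.mp hcu).2, ?_⟩, ?_, ?_⟩
  · intro x hx y hy
    have hxa : a = x := by rw [hlast] at hx; simpa using hx
    subst hxa
    exact (List.isChain_cons.mp hcu).1 y hy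
  · rw [List.head?_append_of_ne_nil _ hne]; exact hmind
  · cases t with
    | nil =>
        have hma : m = a := by simpa using hmu.symm
        refine ⟨a, ?_, hma ▸ hmax⟩
        simpa using hlast
    | cons b t' =>
        refine ⟨m, ?_, hmax⟩
        rw [List.getLast?_append_of_ne_nil _ (by simp : (b :: t') ≠ [])]
        rw [show (a :: b :: t') = [a] ++ (b :: t') by rfl,
          List.getLast?_append_of_ne_nil _ (by simp : (b :: t') ≠ [])] at hmu
        exact hmu

lemma maxChain_of_cross {x y : α} {ld lu : List α} (hxy : x ⋖ y) (hld : DownChain x ld)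
    (hlu : UpChain y lu) : IsMaxChainList (ld ++ lu) := by
  obtain ⟨hcd, hmind, hlast⟩ := hld
  obtain ⟨hcu, hhu, m, hmu, hmax⟩ := hlu
  have hne : ld ≠ [] := by intro h'; rw [h'] at hlast; simp at hlast
  have hne' : lu ≠ [] := by intro h'; rw [h'] at hhu; simp at hhu
  refine ⟨List.isChain_append.mpr ⟨hcd, hcu, ?_⟩, ?_, ?_⟩
  · intro u hu w hw
    have hux : x = u := by rw [hlast] at hu; simpa using hu
    have hwy : y = w := by rw [hhu] at hw; simpa using hw
    rw [← hux, ← hwy]; exact hxy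
  · rw [List.head?_append_of_ne_nil _ hne]; exact hmind
  · rw [List.getLast?_append_of_ne_nil _ hne']; exact ⟨m, hmu, hmax⟩

lemma length_eq_countP {L l₁ l₂ : List α} (p : α → Bool) (h : L = l₁ ++ l₂)
    (h₁ : ∀ z ∈ l₁, p z) (h₂ : ∀ z ∈ l₂, ¬ p z) : l₁.length = L.countP p := by
  subst h
  rw [List.countP_append, List.countP_eq_length.mpr h₁, List.countP_eq_zero.mpr h₂]
  omega

lemma count_maxChains (A : Finset α) (hanti : IsAntichain (· ≤ ·) (A : Set α))
    (hmaxanti : ∀ x : α, ∃ a ∈ A, x ≤ a ∨ a ≤ x) :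
    ∑ a ∈ A, dc a * uc a +
      (Finset.univ.filter
        (fun p : α × α => p.1 ⋖ p.2 ∧ ¬ SPred A p.1 ∧ ¬ TPred A p.2)).card
      ≤ numMaxChains α := by
  classical
  set X : Finset (α × α) :=
    Finset.univ.filter (fun p : α × α => p.1 ⋖ p.2 ∧ ¬ SPred A p.1 ∧ ¬ TPred A p.2) with hX
  -- chosen chains for the cross part
  have hSP_of : ∀ {z y : α}, SPred A y → y ≤ z → SPred A z := by
    rintro z y ⟨a, ha, hay⟩ hyz; exact ⟨a, ha, hay.trans hyz⟩
  -- the injection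
  let Φ₁ : (Σ _a : {a : α // a ∈ A},
      ({l : List α // DownChain _a.1 l} × {l : List α // UpChain _a.1 l})) →
      {l : List α // IsMaxChainList l} := fun q =>
    ⟨q.2.1.1 ++ (q.2.2.1.tail),
      by
        obtain ⟨t, ht⟩ := head?_cases q.2.2.2.2.1
        rw [ht]
        exact maxChain_of_mid q.2.1.2 (ht ▸ q.2.2.2)⟩
  have hXmem : ∀ p : α × α, p ∈ X → p.1 ⋖ p.2 ∧ ¬ SPred A p.1 ∧ ¬ TPred A p.2 := by
    intro p hp
    rw [hX, Finset.mem_filter] at hp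
    exact hp.2
  let Φ₂ : {p : α × α // p ∈ X} → {l : List α // IsMaxChainList l} := fun q =>
    ⟨(exists_downChain q.1.1).choose ++ (exists_upChain q.1.2).choose,
      maxChain_of_cross (hXmem q.1 q.2).1
        (exists_downChain q.1.1).choose_spec (exists_upChain q.1.2).choose_spec⟩
  -- membership facts for mid-glued chains
  have mid_memA : ∀ (a : α) (ha : a ∈ A) (ld lu : List α), DownChain a ld → UpChain a lu →
      a ∈ ld ++ lu.tail ∧ (∀ b ∈ ld ++ lu.tail, b ∈ A → b = a) ∧
      (∀ z ∈ ld, z ≤ a) ∧ (∀ z ∈ lu.tail, a < z) := by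
    intro a ha ld lu hld hlu
    obtain ⟨t, rfl⟩ := head?_cases hlu.2.1
    have hf1 : ∀ z ∈ ld, z ≤ a := downChain_mem_le hld
    have hf2 : ∀ z ∈ (a :: t).tail, a < z := by
      simpa using (List.pairwise_cons.mp (chain'_pairwise hlu.1)).1
    have hmem : a ∈ ld := List.mem_of_mem_getLast? (by rw [hld.2.2]; rfl)
    refine ⟨List.mem_append.mpr (Or.inl hmem), ?_, hf1, hf2⟩
    intro b hb hbA
    rcases List.mem_append.mp hb with hb | hb
    · by_contra hne
      exact hanti hbA ha hne (hf1 b hb)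
    · by_contra hne
      exact hanti ha hbA (fun h => hne (h ▸ rfl)) (hf2 b hb).le
  -- membership facts for cross-glued chains
  have cross_mem : ∀ (x y : α), ¬ SPred A x → ¬ TPred A y →
      (∀ z ∈ (exists_downChain x).choose, ¬ SPred A z) ∧
      (∀ z ∈ (exists_upChain y).choose, SPred A z) := by
    intro x y hSx hTy
    have hSy : SPred A y := by
      obtain ⟨a, ha, hc | hc⟩ := hmaxanti y
      · exact absurd ⟨a, ha, hc⟩ hTy
      · exact ⟨a, ha, hc⟩
    constructor
    · intro z hz hSz
      exact hSx (hSP_of hSz (downChain_mem_le (exists_downChain x).choose_spec z hz))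
    · intro z hz
      exact hSP_of hSy (upChain_mem_le (exists_upChain y).choose_spec z hz)
  have cross_notA : ∀ (x y : α), ¬ SPred A x → ¬ TPred A y →
      ∀ b ∈ (exists_downChain x).choose ++ (exists_upChain y).choose, b ∉ A := by
    intro x y hSx hTy b hb hbA
    rcases List.mem_append.mp hb with hb | hb
    · exact (cross_mem x y hSx hTy).1 b hb ⟨b, hbA, le_rfl⟩
    · exact hTy ⟨b, hbA, upChain_mem_le (exists_upChain y).choose_spec b hb⟩
  -- injectivity
  have hinj : Function.Injective (Sum.elim Φ₁ Φ₂) := by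
    rintro (⟨⟨a, ha⟩, ⟨ld, hld⟩, ⟨lu, hlu⟩⟩ | ⟨⟨x, y⟩, hq⟩)
           (⟨⟨a', ha'⟩, ⟨ld', hld'⟩, ⟨lu', hlu'⟩⟩ | ⟨⟨x', y'⟩, hq'⟩) h
    · have hL : ld ++ lu.tail = ld' ++ lu'.tail := by
        simpa [Φ₁] using congrArg Subtype.val h
      obtain ⟨hmem, huniq, hf1, hf2⟩ := mid_memA a ha ld lu hld hlu
      obtain ⟨hmem', huniq', hf1', hf2'⟩ := mid_memA a' ha' ld' lu' hld' hlu'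
      obtain rfl : a = a' := (huniq' a (hL ▸ hmem) ha)
      have hlen : ld.length = ld'.length := by
        rw [length_eq_countP (fun z => decide (z ≤ a)) rfl
            (fun z hz => by simpa using hf1 z hz)
            (fun z hz => by simpa using (hf2 z hz).not_ge), hL,
          ← length_eq_countP (fun z => decide (z ≤ a)) rfl
            (fun z hz => by simpa using hf1' z hz)
            (fun z hz => by simpa using (hf2' z hz).not_ge)]
      obtain ⟨hld_eq, htl_eq⟩ := List.append_inj hL hlen
      obtain ⟨t, rfl⟩ := head?_cases hlu.2.1
      obtain ⟨t', rfl⟩ := head?_cases hlu'.2.1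
      obtain rfl : ld = ld' := hld_eq
      obtain rfl : t = t' := htl_eq
      rfl
    · -- mid vs cross: impossible
      exfalso
      have hL : ld ++ lu.tail =
          (exists_downChain (x', y').1).choose ++ (exists_upChain (x', y').2).choose := by
        simpa [Φ₁, Φ₂] using congrArg Subtype.val h
      obtain ⟨hmem, -, -, -⟩ := mid_memA a ha ld lu hld hlu
      obtain ⟨-, hS2, hT2⟩ := hXmem _ hq'
      exact cross_notA x' y' hS2 hT2 a (hL ▸ hmem) ha
    · exfalso
      have hL : ld' ++ lu'.tail =
          (exists_downChain (x, y).1).choose ++ (exists_upChain (x, y).2).choose := by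
        simpa [Φ₁, Φ₂] using congrArg Subtype.val h.symm
      obtain ⟨hmem, -, -, -⟩ := mid_memA a' ha' ld' lu' hld' hlu'
      obtain ⟨-, hS2, hT2⟩ := hXmem _ hq
      exact cross_notA x y hS2 hT2 a' (hL ▸ hmem) ha'
    · obtain ⟨hc1, hS1, hT1⟩ := hXmem _ hq
      obtain ⟨hc2, hS2, hT2⟩ := hXmem _ hq'
      have hL : (exists_downChain x).choose ++ (exists_upChain y).choose =
          (exists_downChain x').choose ++ (exists_upChain y').choose := by
        simpa [Φ₂] using congrArg Subtype.val h
      have hlen : (exists_downChain x).choose.length = (exists_downChain x').choose.length := by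
        rw [length_eq_countP (fun z => !decide (SPred A z)) rfl
            (fun z hz => by simpa using (cross_mem x y hS1 hT1).1 z hz)
            (fun z hz => by simpa using (cross_mem x y hS1 hT1).2 z hz), hL,
          ← length_eq_countP (fun z => !decide (SPred A z)) rfl
            (fun z hz => by simpa using (cross_mem x' y' hS2 hT2).1 z hz)
            (fun z hz => by simpa using (cross_mem x' y' hS2 hT2).2 z hz)]
      obtain ⟨hd_eq, hu_eq⟩ := List.append_inj hL hlen
      have hx : x = x' := by
        have h1 := (exists_downChain x).choose_spec.2.2
        have h2 := (exists_downChain x').choose_spec.2.2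
        rw [hd_eq] at h1
        rw [h1] at h2
        simpa using h2
      have hy : y = y' := by
        have h1 := (exists_upChain y).choose_spec.2.1
        have h2 := (exists_upChain y').choose_spec.2.1
        rw [hu_eq] at h1
        rw [h1] at h2
        simpa using h2
      subst hx; subst hy
      rfl
  -- cardinality computation
  have hcard := Nat.card_le_card_of_injective _ hinj
  rw [Nat.card_sum, nat_card_sigma] at hcard
  have h1 : ∑ i : {a : α // a ∈ A},
      Nat.card ({l : List α // DownChain i.1 l} × {l : List α // UpChain i.1 l})
      = ∑ a ∈ A, dc a * uc a := by
    rw [Finset.sum_subtype A (fun x => Iff.rfl) (fun a => dc a * uc a)]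
    congr 1
    ext i
    rw [Nat.card_prod]
    rfl
  have h2 : Nat.card {p : α × α // p ∈ X} = X.card := Nat.card_eq_finsetCard X
  rw [h1, h2] at hcard
  exact hcard


lemma nat_card_subtype (p : α → Prop) : Nat.card {x // p x} = (Finset.univ.filter p).card := by
  classical
  rw [Nat.card_eq_fintype_card, Fintype.card_subtype]

lemma nat_card_subtype' {β : Type*} [Fintype β] (p : β → Prop) :
    Nat.card {x // p x} = (Finset.univ.filter p).card := by
  classical
  rw [Nat.card_eq_fintype_card, Fintype.card_subtype]

lemma edges_filter_fst (s : Finset α) :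
    (Finset.univ.filter (fun p : α × α => p.1 ⋖ p.2 ∧ p.1 ∈ s)).card
      = ∑ z ∈ s, (upcovers z).card := by
  classical
  rw [Finset.card_eq_sum_card_fiberwise (f := Prod.fst)
    (t := s) (fun p hp => (Finset.mem_filter.mp hp).2.2)]
  apply Finset.sum_congr rfl
  intro z hz
  refine Finset.card_bij' (fun p _ => p.2) (fun w _ => (z, w)) ?_ ?_ ?_ ?_
  · intro p hp
    simp only [Finset.mem_filter, Finset.mem_univ, true_and] at hp
    obtain ⟨⟨hc, -⟩, hfst⟩ := hp
    show p.2 ∈ upcovers z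
    rw [mem_upcovers]
    exact hfst ▸ hc
  · intro w hw
    simp only [Finset.mem_filter, Finset.mem_univ, true_and, eq_self_iff_true, and_true]
    exact ⟨mem_upcovers.mp hw, hz⟩
  · intro p hp
    simp only [Finset.mem_filter] at hp
    exact Prod.ext hp.2.symm rfl
  · intro w hw
    rfl

lemma edges_filter_snd (s : Finset α) :
    (Finset.univ.filter (fun p : α × α => p.1 ⋖ p.2 ∧ p.2 ∈ s)).card
      = ∑ z ∈ s, (downcovers z).card := by
  classical
  rw [Finset.card_eq_sum_card_fiberwise (f := Prod.snd)
    (t := s) (fun p hp => (Finset.mem_filter.mp hp).2.2)]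
  apply Finset.sum_congr rfl
  intro z hz
  refine Finset.card_bij' (fun p _ => p.1) (fun w _ => (w, z)) ?_ ?_ ?_ ?_
  · intro p hp
    simp only [Finset.mem_filter, Finset.mem_univ, true_and] at hp
    obtain ⟨⟨hc, -⟩, hsnd⟩ := hp
    show p.1 ∈ downcovers z
    rw [mem_downcovers]
    exact hsnd ▸ hc
  · intro w hw
    simp only [Finset.mem_filter, Finset.mem_univ, true_and, eq_self_iff_true, and_true]
    exact ⟨mem_downcovers.mp hw, hz⟩
  · intro p hp
    simp only [Finset.mem_filter] at hp
    exact Prod.ext rfl hp.2.symm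
  · intro w hw
    rfl

lemma edge_partition {q r : α → Prop} (hq : ∀ x y : α, x ⋖ y → ¬ (q x ∧ r y)) :
    (Finset.univ.filter (fun p : α × α => p.1 ⋖ p.2)).card =
      (Finset.univ.filter (fun p : α × α => p.1 ⋖ p.2 ∧ q p.1)).card
      + (Finset.univ.filter (fun p : α × α => p.1 ⋖ p.2 ∧ r p.2)).card
      + (Finset.univ.filter (fun p : α × α => p.1 ⋖ p.2 ∧ ¬ q p.1 ∧ ¬ r p.2)).card := by
  classical
  set E : Finset (α × α) := Finset.univ.filter (fun p : α × α => p.1 ⋖ p.2) with hE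
  have h1 : (E.filter (fun p => q p.1)).card + (E.filter (fun p => ¬ q p.1)).card = E.card :=
    Finset.card_filter_add_card_filter_not _
  have h2 : ((E.filter (fun p => ¬ q p.1)).filter (fun p => r p.2)).card
      + ((E.filter (fun p => ¬ q p.1)).filter (fun p => ¬ r p.2)).card
      = (E.filter (fun p => ¬ q p.1)).card :=
    Finset.card_filter_add_card_filter_not _
  have e1 : E.filter (fun p => q p.1) = Finset.univ.filter (fun p : α × α => p.1 ⋖ p.2 ∧ q p.1) := by
    rw [hE, Finset.filter_filter]
  have e2 : (E.filter (fun p => ¬ q p.1)).filter (fun p => r p.2)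
      = Finset.univ.filter (fun p : α × α => p.1 ⋖ p.2 ∧ r p.2) := by
    rw [hE]
    ext p
    simp only [Finset.mem_filter, Finset.mem_univ, true_and]
    constructor
    · rintro ⟨⟨hc, -⟩, hr⟩; exact ⟨hc, hr⟩
    · rintro ⟨hc, hr⟩; exact ⟨⟨hc, fun hqp => hq p.1 p.2 hc ⟨hqp, hr⟩⟩, hr⟩
  have e3 : (E.filter (fun p => ¬ q p.1)).filter (fun p => ¬ r p.2)
      = Finset.univ.filter (fun p : α × α => p.1 ⋖ p.2 ∧ ¬ q p.1 ∧ ¬ r p.2) := by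
    rw [hE]
    ext p
    simp only [Finset.mem_filter, Finset.mem_univ, true_and]
    tauto
  rw [← e1, ← e2, ← e3]
  omega

lemma sum_indicator_isMax {s : Finset α} (hs : ∀ z, IsMax z → z ∈ s) :
    ∑ z ∈ s, (if IsMax z then (1 : ℤ) else 0) = numMax α := by
  classical
  rw [← Finset.sum_filter]
  simp only [Finset.sum_const, smul_eq_mul, mul_one]
  rw [numMax, nat_card_subtype]
  have : s.filter IsMax = Finset.univ.filter IsMax := by
    ext z
    simp only [Finset.mem_filter, Finset.mem_univ, true_and]
    exact ⟨fun h => h.2, fun h => ⟨hs z h, h⟩⟩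
  rw [this]
  simp

lemma sum_indicator_isMin {s : Finset α} (hs : ∀ z, IsMin z → z ∈ s) :
    ∑ z ∈ s, (if IsMin z then (1 : ℤ) else 0) = numMin α := by
  classical
  rw [← Finset.sum_filter]
  simp only [Finset.sum_const, smul_eq_mul, mul_one]
  rw [numMin, nat_card_subtype]
  have : s.filter IsMin = Finset.univ.filter IsMin := by
    ext z
    simp only [Finset.mem_filter, Finset.mem_univ, true_and]
    exact ⟨fun h => h.2, fun h => ⟨hs z h, h⟩⟩
  rw [this]
  simp

lemma wplus_cast (z : α) :
    (wplus z : ℤ) = ((upcovers z).card : ℤ) - 1 + (if IsMax z then (1 : ℤ) else 0) := by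
  by_cases hz : IsMax z
  · rw [if_pos hz, wplus, upcovers_isMax hz]
    simp
  · rw [if_neg hz, wplus]
    have := upcovers_card_pos hz
    push_cast [Nat.cast_sub this]
    ring

lemma wminus_cast (z : α) :
    (wminus z : ℤ) = ((downcovers z).card : ℤ) - 1 + (if IsMin z then (1 : ℤ) else 0) := by
  by_cases hz : IsMin z
  · rw [if_pos hz, wminus, downcovers_isMin hz]
    simp
  · rw [if_neg hz, wminus]
    have := downcovers_card_pos hz
    push_cast [Nat.cast_sub this]
    ring

theorem gap_lower_bound' (A : Finset α)
    (hanti : IsAntichain (· ≤ ·) (A : Set α))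
    (hmaxanti : ∀ x : α, ∃ a ∈ A, x ≤ a ∨ a ≤ x) :
    ∑ v ∈ A, ((uc v : ℤ) - 1) * ((dc v : ℤ) - 1) ≤ gap α := by
  classical
  set Sfin : Finset α := Finset.univ.filter (SPred A) with hSfin
  set Tfin : Finset α := Finset.univ.filter (TPred A) with hTfin
  have hmemS : ∀ z, z ∈ Sfin ↔ SPred A z := by intro z; rw [hSfin]; simp
  have hmemT : ∀ z, z ∈ Tfin ↔ TPred A z := by intro z; rw [hTfin]; simp
  -- K1 : counting up-chains from A
  have hK1 : A.card + ∑ z ∈ Sfin, wplus z ≤ ∑ a ∈ A, uc a := by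
    have h1 : ∑ a ∈ A, (1 + ∑ z ∈ Finset.univ.filter (a ≤ ·), wplus z) ≤ ∑ a ∈ A, uc a :=
      Finset.sum_le_sum (fun a _ => uc_key a)
    rw [Finset.sum_add_distrib, Finset.sum_const, smul_eq_mul, mul_one] at h1
    refine le_trans (Nat.add_le_add_left ?_ _) h1
    refine filter_sum_le (· ≤ ·) wplus ?_
    rintro z ⟨a, ha, haz⟩
    exact ⟨a, ha, haz⟩
  have hK2 : A.card + ∑ z ∈ Tfin, wminus z ≤ ∑ a ∈ A, dc a := by
    have h1 : ∑ a ∈ A, (1 + ∑ z ∈ Finset.univ.filter (· ≤ a), wminus z) ≤ ∑ a ∈ A, dc a :=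
      Finset.sum_le_sum (fun a _ => dc_key a)
    rw [Finset.sum_add_distrib, Finset.sum_const, smul_eq_mul, mul_one] at h1
    refine le_trans (Nat.add_le_add_left ?_ _) h1
    refine filter_sum_le (fun w z => z ≤ w) wminus ?_
    rintro z ⟨a, ha, hza⟩
    exact ⟨a, ha, hza⟩
  have hK3 := count_maxChains A hanti hmaxanti
  -- maximal elements are in S, minimal in T
  have hmaxS : ∀ z, IsMax z → SPred A z := by
    intro z hz
    obtain ⟨a, ha, hc | hc⟩ := hmaxanti z
    · exact ⟨a, ha, hz hc⟩
    · exact ⟨a, ha, hc⟩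
  have hminT : ∀ z, IsMin z → TPred A z := by
    intro z hz
    obtain ⟨a, ha, hc | hc⟩ := hmaxanti z
    · exact ⟨a, ha, hc⟩
    · exact ⟨a, ha, hz hc⟩
  -- K4 / K5 : converting weight sums
  have hK4 : (∑ z ∈ Sfin, (wplus z : ℤ))
      = (∑ z ∈ Sfin, ((upcovers z).card : ℤ)) - Sfin.card + numMax α := by
    rw [Finset.sum_congr rfl (fun z _ => wplus_cast z), Finset.sum_add_distrib,
      Finset.sum_sub_distrib, Finset.sum_const, nsmul_eq_mul, mul_one,
      sum_indicator_isMax (fun z hz => (hmemS z).mpr (hmaxS z hz))]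
  have hK5 : (∑ z ∈ Tfin, (wminus z : ℤ))
      = (∑ z ∈ Tfin, ((downcovers z).card : ℤ)) - Tfin.card + numMin α := by
    rw [Finset.sum_congr rfl (fun z _ => wminus_cast z), Finset.sum_add_distrib,
      Finset.sum_sub_distrib, Finset.sum_const, nsmul_eq_mul, mul_one,
      sum_indicator_isMin (fun z hz => (hmemT z).mpr (hminT z hz))]
  -- edge sums
  have hES : (Finset.univ.filter (fun p : α × α => p.1 ⋖ p.2 ∧ SPred A p.1)).card
      = ∑ z ∈ Sfin, (upcovers z).card := by
    rw [← edges_filter_fst Sfin]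
    congr 1
    ext p
    simp only [Finset.mem_filter, Finset.mem_univ, true_and, hmemS]
  have hET : (Finset.univ.filter (fun p : α × α => p.1 ⋖ p.2 ∧ TPred A p.2)).card
      = ∑ z ∈ Tfin, (downcovers z).card := by
    rw [← edges_filter_snd Tfin]
    congr 1
    ext p
    simp only [Finset.mem_filter, Finset.mem_univ, true_and, hmemT]
  -- edge partition
  have hnoboth : ∀ x y : α, x ⋖ y → ¬ (SPred A x ∧ TPred A y) := by
    rintro x y hxy ⟨⟨a, ha, hax⟩, ⟨b, hb, hyb⟩⟩
    rcases eq_or_ne a b with rfl | hne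
    · exact absurd (lt_of_le_of_lt hax (hxy.lt.trans_le hyb)) (lt_irrefl a)
    · exact hanti ha hb hne (hax.trans (hxy.lt.le.trans hyb))
  have hpart := edge_partition (q := SPred A) (r := TPred A) hnoboth
  -- sizes of S and T
  have hK6 : Sfin.card + Tfin.card = Fintype.card α + A.card := by
    have hunion : Sfin ∪ Tfin = Finset.univ := by
      ext z
      simp only [Finset.mem_union, hmemS, hmemT, Finset.mem_univ, iff_true]
      obtain ⟨a, ha, hc | hc⟩ := hmaxanti z
      · exact Or.inr ⟨a, ha, hc⟩
      · exact Or.inl ⟨a, ha, hc⟩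
    have hinter : Sfin ∩ Tfin = A := by
      ext z
      simp only [Finset.mem_inter, hmemS, hmemT]
      constructor
      · rintro ⟨⟨a, ha, haz⟩, ⟨b, hb, hzb⟩⟩
        rcases eq_or_ne a b with rfl | hne
        · exact le_antisymm hzb haz ▸ ha
        · exact absurd (haz.trans hzb) (hanti ha hb hne)
      · intro hz
        exact ⟨⟨z, hz, le_rfl⟩, ⟨z, hz, le_rfl⟩⟩
    have := Finset.card_union_add_card_inter Sfin Tfin
    rw [hunion, hinter, Finset.card_univ] at this
    omega
  -- unfold the numeric definitions
  have hedges : numEdges α = (Finset.univ.filter (fun p : α × α => p.1 ⋖ p.2)).card := by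
    rw [numEdges, nat_card_subtype']
  have hcardα : (Nat.card α : ℤ) = (Fintype.card α : ℤ) := by
    rw [Nat.card_eq_fintype_card]
  -- final arithmetic
  have hLHS : ∑ v ∈ A, ((uc v : ℤ) - 1) * ((dc v : ℤ) - 1)
      = ((∑ a ∈ A, dc a * uc a : ℕ) : ℤ) - ((∑ a ∈ A, uc a : ℕ) : ℤ)
        - ((∑ a ∈ A, dc a : ℕ) : ℤ) + A.card := by
    push_cast
    rw [Finset.sum_congr rfl (fun v _ => by ring :
      ∀ v ∈ A, ((uc v : ℤ) - 1) * ((dc v : ℤ) - 1)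
        = (dc v : ℤ) * (uc v : ℤ) - (uc v : ℤ) - (dc v : ℤ) + 1),
      Finset.sum_add_distrib, Finset.sum_sub_distrib, Finset.sum_sub_distrib,
      Finset.sum_const, nsmul_eq_mul, mul_one]
  rw [hLHS, gap]
  have c1 : ((∑ a ∈ A, dc a * uc a : ℕ) : ℤ)
      + ((Finset.univ.filter
          (fun p : α × α => p.1 ⋖ p.2 ∧ ¬ SPred A p.1 ∧ ¬ TPred A p.2)).card : ℤ)
      ≤ (numMaxChains α : ℤ) := by
    exact_mod_cast hK3
  have c2 : (A.card : ℤ) + ∑ z ∈ Sfin, (wplus z : ℤ) ≤ ((∑ a ∈ A, uc a : ℕ) : ℤ) := by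
    push_cast
    exact_mod_cast hK1
  have c3 : (A.card : ℤ) + ∑ z ∈ Tfin, (wminus z : ℤ) ≤ ((∑ a ∈ A, dc a : ℕ) : ℤ) := by
    push_cast
    exact_mod_cast hK2
  have c6 : (Sfin.card : ℤ) + Tfin.card = (Fintype.card α : ℤ) + A.card := by
    exact_mod_cast hK6
  have c7 : (numEdges α : ℤ)
      = ((∑ z ∈ Sfin, (upcovers z).card : ℕ) : ℤ)
      + ((∑ z ∈ Tfin, (downcovers z).card : ℕ) : ℤ)
      + ((Finset.univ.filter
          (fun p : α × α => p.1 ⋖ p.2 ∧ ¬ SPred A p.1 ∧ ¬ TPred A p.2)).card : ℤ) := by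
    rw [hedges]
    rw [← hES, ← hET]
    exact_mod_cast hpart
  have c8 : (∑ z ∈ Sfin, ((upcovers z).card : ℤ))
      = ((∑ z ∈ Sfin, (upcovers z).card : ℕ) : ℤ) := by push_cast; ring
  have c9 : (∑ z ∈ Tfin, ((downcovers z).card : ℤ))
      = ((∑ z ∈ Tfin, (downcovers z).card : ℕ) : ℤ) := by push_cast; ring
  rw [hcardα]
  linarith [hK4, hK5, c1, c2, c3, c6, c7, c8, c9]

end Basics

theorem gap_lower_bound (α : Type*) [Fintype α] [PartialOrder α] (A : Finset α)
    (hanti : IsAntichain (· ≤ ·) (A : Set α))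
    (hmaxanti : ∀ x : α, ∃ a ∈ A, x ≤ a ∨ a ≤ x) :
    ∑ v ∈ A, ((uc v : ℤ) - 1) * ((dc v : ℤ) - 1) ≤ gap α :=
  gap_lower_bound' (α := α) A hanti hmaxanti
end
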